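/- arXiv:math/0012105 — 11 statements merged into one kernel-verified Lean document; each statement's English description precedes it below -/
import Mathlib

section
/- Let A be a C*-algebra, let E be a right Hilbert C*-module over A, and let Y ⊆ E be a closed A-submodule. If P, Q : E → E are linear maps with P∘P = P, Q∘Q = Q, ‖P(x)‖ ≤ ‖x‖ and ‖Q(x)‖ ≤ ‖x‖ for all x ∈ E, and range P = range Q = Y, then P = Q. In other words, there is at most one contractive linear projection from a Hilbert C*-module onto a closed submodule. -/
open scoped RightActions

/-- The December 2024 Mathlib definition of `CStarModule` (right Hilbert C⋆-module, with the
right action given by `SMul Aᵐᵒᵖ E`), kept verbatim because Mathlib's `CStarModule` is now a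
left module. -/
class CStarModuleOld (A E : Type*) [NonUnitalSemiring A] [StarRing A] [Module ℂ A]
    [AddCommGroup E] [Module ℂ E] [PartialOrder A] [SMul Aᵐᵒᵖ E] [Norm A] [Norm E]
    extends Inner A E where
  inner_add_right {x} {y} {z} : inner x (y + z) = inner x y + inner x z
  inner_self_nonneg {x} : 0 ≤ inner x x
  inner_self {x} : inner x x = 0 ↔ x = 0
  inner_op_smul_right {a : A} {x y : E} : inner x (y <• a) = inner x y * a
  inner_smul_right_complex {z : ℂ} {x} {y} : inner x (z • y) = z • inner x y
  star_inner x y : star (inner x y) = inner y x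
  norm_eq_sqrt_norm_inner_self x : ‖x‖ = √‖inner x x‖

section OldAux
variable {A E : Type*} [NonUnitalCStarAlgebra A] [PartialOrder A]
    [NormedAddCommGroup E] [Module ℂ E] [SMul Aᵐᵒᵖ E] [CStarModuleOld A E]

lemma CStarModuleOld.inner_zero_right {x : E} : inner (𝕜 := A) x 0 = 0 := by
  simpa using CStarModuleOld.inner_smul_right_complex (A := A) (z := 0) (x := x) (y := 0)

lemma CStarModuleOld.inner_add_left {x y z : E} :
    inner (𝕜 := A) (x + y) z = inner (𝕜 := A) x z + inner (𝕜 := A) y z := by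
  rw [← CStarModuleOld.star_inner (A := A) z (x + y), CStarModuleOld.inner_add_right, star_add,
    CStarModuleOld.star_inner, CStarModuleOld.star_inner]

lemma CStarModuleOld.inner_sub_right {x y z : E} :
    inner (𝕜 := A) x (y - z) = inner (𝕜 := A) x y - inner (𝕜 := A) x z := by
  have : y - z = y + ((-1 : ℂ) • z) := by simp [sub_eq_add_neg]
  rw [this, CStarModuleOld.inner_add_right, CStarModuleOld.inner_smul_right_complex, neg_one_smul,
    sub_eq_add_neg]

lemma CStarModuleOld.inner_sub_left {x y z : E} :
    inner (𝕜 := A) (x - y) z = inner (𝕜 := A) x z - inner (𝕜 := A) y z := by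
  rw [← CStarModuleOld.star_inner (A := A) z (x - y), CStarModuleOld.inner_sub_right, star_sub,
    CStarModuleOld.star_inner, CStarModuleOld.star_inner]

lemma CStarModuleOld.inner_op_smul_left {a : A} {x y : E} :
    inner (𝕜 := A) (x <• a) y = star a * inner (𝕜 := A) x y := by
  rw [← CStarModuleOld.star_inner (A := A) y (x <• a), CStarModuleOld.inner_op_smul_right, star_mul,
    CStarModuleOld.star_inner]

lemma CStarModuleOld.isSelfAdjoint_inner_self {x : E} : IsSelfAdjoint (inner (𝕜 := A) x x) :=
  CStarModuleOld.star_inner x x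

lemma CStarModuleOld.norm_sq_eq {x : E} : ‖x‖ ^ 2 = ‖inner (𝕜 := A) x x‖ := by
  rw [CStarModuleOld.norm_eq_sqrt_norm_inner_self (A := A) x, Real.sq_sqrt (norm_nonneg _)]

end OldAux

/-- Auxiliary C*-algebra lemma: if `0 ≤ α ≤ M • β` and for all `t > 0` the element
`t² • α - 2t • β + δ` is nonnegative with norm at least `t² ‖α‖`, then `α = 0`. -/
lemma stmt3_alg_aux {A : Type*} [NonUnitalCStarAlgebra A] [PartialOrder A] [StarOrderedRing A]
    (α β δ : A) (M : ℝ) (hαnn : 0 ≤ α) (hM : 0 < M) (hαβ : α ≤ M • β) (hδnn : 0 ≤ δ)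
    (hkey : ∀ t : ℝ, 0 < t →
      (0 ≤ (t^2) • α + ((-(2*t)) • β + δ)) ∧
      t^2 * ‖α‖ ≤ ‖(t^2) • α + ((-(2*t)) • β + δ)‖) :
    α = 0 := by
  by_contra hα0
  have hm : (0:ℝ) < ‖α‖ := norm_pos_iff.mpr hα0
  set m := ‖α‖ with hmdef
  have key2 : ∀ t : ℝ, 0 < t → 2 / M ≤ t → (2*t/M) * m ≤ ‖δ‖ := by
    intro t ht htM
    obtain ⟨hXnn, hXge⟩ := hkey t ht
    have hs : (0:ℝ) ≤ t^2 - 2*t/M := by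
      rw [sub_nonneg, div_le_iff₀ hM]
      have : (2/M) * M ≤ t * M := mul_le_mul_of_nonneg_right htM hM.le
      rw [div_mul_cancel₀ _ hM.ne'] at this
      nlinarith
    have hXle : (t^2) • α + ((-(2*t)) • β + δ) ≤ (t^2 - 2*t/M) • α + δ := by
      have h1 : ((2*t/M) : ℝ) • α ≤ (2*t) • β := by
        calc ((2*t/M) : ℝ) • α ≤ (2*t/M) • (M • β) :=
              smul_le_smul_of_nonneg_left hαβ (by positivity)
          _ = (2*t) • β := by rw [smul_smul]; congr 1; field_simp
      have e : (t^2) • α + ((-(2*t)) • β + δ) = ((t^2) • α - (2*t) • β) + δ := by module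
      have e2 : (t^2 - 2*t/M) • α + δ = ((t^2) • α - (2*t/M) • α) + δ := by module
      rw [e, e2]
      exact add_le_add_left (sub_le_sub_left h1 _) δ
    have hnorm : ‖(t^2) • α + ((-(2*t)) • β + δ)‖ ≤ (t^2 - 2*t/M) * m + ‖δ‖ := by
      calc ‖(t^2) • α + ((-(2*t)) • β + δ)‖ ≤ ‖(t^2 - 2*t/M) • α + δ‖ :=
            CStarAlgebra.norm_le_norm_of_nonneg_of_le hXnn hXle
        _ ≤ ‖(t^2 - 2*t/M) • α‖ + ‖δ‖ := norm_add_le _ _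
        _ = (t^2 - 2*t/M) * m + ‖δ‖ := by
            rw [norm_smul, Real.norm_eq_abs, abs_of_nonneg hs]
    have expand : (t^2 - 2*t/M) * m = t^2 * m - (2*t/M) * m := by ring
    rw [expand] at hnorm
    linarith [hXge.trans hnorm]
  set t : ℝ := max (2 / M) (M * (‖δ‖ + 1) / (2 * m)) with htdef
  have ht : 0 < t := lt_max_of_lt_left (by positivity)
  have hineq := key2 t ht (le_max_left _ _)
  have h2 : M * (‖δ‖ + 1) / (2 * m) ≤ t := le_max_right _ _
  rw [div_le_iff₀ (by positivity)] at h2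
  have : ‖δ‖ + 1 ≤ (2*t/M) * m := by
    rw [div_mul_eq_mul_div, le_div_iff₀ hM]
    nlinarith
  linarith

/-- Orthogonality lemma: if `u` satisfies `‖y'‖ ≤ ‖y' + u‖` for all `y'` in the submodule `Y`,
then `u` is orthogonal to `Y`. -/
lemma stmt3_ortho_aux {A E : Type*} [NonUnitalCStarAlgebra A] [PartialOrder A]
    [StarOrderedRing A] [NormedAddCommGroup E] [Module ℂ E] [SMul Aᵐᵒᵖ E] [CStarModuleOld A E]
    (Y : Submodule ℂ E) (hYmod : ∀ y ∈ Y, ∀ a : A, y <• a ∈ Y) (u : E)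
    (hu : ∀ y' ∈ Y, ‖y'‖ ≤ ‖y' + u‖) :
    ∀ y ∈ Y, inner (𝕜 := A) u y = 0 := by
  intro y hy
  have hyu : inner (𝕜 := A) y u = star (inner (𝕜 := A) u y) :=
    (CStarModuleOld.star_inner u y).symm
  -- apply the algebra lemma with explicit α, β, δ
  have hα0 : inner (𝕜 := A) u y * (inner (𝕜 := A) y y * star (inner (𝕜 := A) u y)) = 0 := by
    apply stmt3_alg_aux _ (inner (𝕜 := A) u y * star (inner (𝕜 := A) u y))
      (inner (𝕜 := A) u u) (‖(inner (𝕜 := A) y y : A)‖ + 1)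
    · -- 0 ≤ α
      have : inner (𝕜 := A) u y * (inner (𝕜 := A) y y * star (inner (𝕜 := A) u y))
          = star (star (inner (𝕜 := A) u y)) * inner (𝕜 := A) y y
              * (star (inner (𝕜 := A) u y)) := by
        rw [star_star, mul_assoc]
      rw [this]
      exact star_left_conjugate_nonneg CStarModuleOld.inner_self_nonneg _
    · positivity
    · -- α ≤ (M+1) • β
      have h1 := CStarAlgebra.star_right_conjugate_le_norm_smul (a := inner (𝕜 := A) u y)
        (b := inner (𝕜 := A) y y) (hb := CStarModuleOld.isSelfAdjoint_inner_self)
      rw [mul_assoc] at h1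
      refine h1.trans ?_
      have hβnn : (0:A) ≤ inner (𝕜 := A) u y * star (inner (𝕜 := A) u y) := by
        simpa using star_mul_self_nonneg (star (inner (𝕜 := A) u y))
      have hle1 : (‖(inner (𝕜 := A) y y : A)‖ : ℝ) ≤ ‖(inner (𝕜 := A) y y : A)‖ + 1 := by
        linarith
      exact smul_le_smul_of_nonneg_right hle1 hβnn
    · exact CStarModuleOld.inner_self_nonneg
    · intro t ht
      set a : A := (-t) • star (inner (𝕜 := A) u y) with ha
      have hy' : (y <• a : E) ∈ Y := hYmod y hy a
      have hstar_a : star a = (-t) • (inner (𝕜 := A) u y) := by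
        rw [ha, star_smul, star_star, star_trivial]
      have hXeq : inner (𝕜 := A) (y <• a + u) (y <• a + u)
          = (t^2) • (inner (𝕜 := A) u y * (inner (𝕜 := A) y y * star (inner (𝕜 := A) u y)))
            + ((-(2*t)) • (inner (𝕜 := A) u y * star (inner (𝕜 := A) u y))
              + inner (𝕜 := A) u u) := by
        rw [CStarModuleOld.inner_add_right, CStarModuleOld.inner_add_left,
          CStarModuleOld.inner_add_left, CStarModuleOld.inner_op_smul_right,
          CStarModuleOld.inner_op_smul_left, CStarModuleOld.inner_op_smul_left,
          CStarModuleOld.inner_op_smul_right, hstar_a, hyu, ha]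
        simp only [smul_mul_assoc, mul_smul_comm, smul_smul, mul_assoc]
        module
      constructor
      · rw [← hXeq]; exact CStarModuleOld.inner_self_nonneg
      · rw [← hXeq]
        have hle := hu _ hy'
        have hsq : ‖(y <• a : E)‖^2 ≤ ‖(y <• a : E) + u‖^2 :=
          pow_le_pow_left₀ (norm_nonneg _) hle 2
        rw [CStarModuleOld.norm_sq_eq (A := A), CStarModuleOld.norm_sq_eq (A := A)] at hsq
        have e1 : inner (𝕜 := A) (y <• a : E) (y <• a : E)
            = (t^2) • (inner (𝕜 := A) u y * (inner (𝕜 := A) y y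
                * star (inner (𝕜 := A) u y))) := by
          rw [CStarModuleOld.inner_op_smul_right, CStarModuleOld.inner_op_smul_left,
            hstar_a, ha]
          simp only [smul_mul_assoc, mul_smul_comm, smul_smul, mul_assoc]
          module
        rw [e1, norm_smul, Real.norm_eq_abs, abs_of_nonneg (sq_nonneg t)] at hsq
        exact hsq
  -- now conclude `inner u y = 0`
  have hv : (y <• star (inner (𝕜 := A) u y) : E) = 0 := by
    rw [← CStarModuleOld.inner_self (A := A)]
    rw [CStarModuleOld.inner_op_smul_right, CStarModuleOld.inner_op_smul_left, star_star,
      mul_assoc]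
    exact hα0
  have hβ0 : inner (𝕜 := A) u y * star (inner (𝕜 := A) u y) = 0 := by
    have := congrArg (fun w => inner (𝕜 := A) u w) hv
    beta_reduce at this
    rw [CStarModuleOld.inner_op_smul_right, CStarModuleOld.inner_zero_right] at this
    exact this
  exact CStarRing.mul_star_self_eq_zero_iff _ |>.mp hβ0

/-- Let `E` be a right Hilbert C*-module over a C*-algebra `A` and `Y ⊆ E` a
closed `A`-submodule.  If `P, Q : E → E` are contractive linear idempotents with
`range P = range Q = Y`, then `P = Q`: there is at most one contractive linear projection from a
Hilbert C*-module onto a closed submodule. -/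
theorem stmt_3 {A E : Type*} [NonUnitalCStarAlgebra A] [PartialOrder A] [StarOrderedRing A]
    [NormedAddCommGroup E] [Module ℂ E] [SMul Aᵐᵒᵖ E] [CStarModuleOld A E] [CompleteSpace E]
    (Y : Submodule ℂ E) (hYclosed : IsClosed (Y : Set E))
    (hYmod : ∀ y ∈ Y, ∀ a : A, y <• a ∈ Y)
    (P Q : E →ₗ[ℂ] E)
    (hP2 : ∀ x, P (P x) = P x) (hQ2 : ∀ x, Q (Q x) = Q x)
    (hPc : ∀ x, ‖P x‖ ≤ ‖x‖) (hQc : ∀ x, ‖Q x‖ ≤ ‖x‖)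
    (hPr : Set.range P = (Y : Set E)) (hQr : Set.range Q = (Y : Set E)) :
    P = Q := by
  have hPfix : ∀ y ∈ Y, P y = y := by
    intro y hy
    obtain ⟨w, hw⟩ : y ∈ Set.range P := by rw [hPr]; exact hy
    rw [← hw, hP2]
  have hQfix : ∀ y ∈ Y, Q y = y := by
    intro y hy
    obtain ⟨w, hw⟩ : y ∈ Set.range Q := by rw [hQr]; exact hy
    rw [← hw, hQ2]
  have hPker : ∀ x, P (x - P x) = 0 := fun x => by rw [map_sub, hP2, sub_self]
  have hQker : ∀ x, Q (x - Q x) = 0 := fun x => by rw [map_sub, hQ2, sub_self]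
  have huP : ∀ x, ∀ y' ∈ Y, ‖y'‖ ≤ ‖y' + (x - P x)‖ := by
    intro x y' hy'
    calc ‖y'‖ = ‖P (y' + (x - P x))‖ := by rw [map_add, hPfix y' hy', hPker, add_zero]
      _ ≤ ‖y' + (x - P x)‖ := hPc _
  have huQ : ∀ x, ∀ y' ∈ Y, ‖y'‖ ≤ ‖y' + (x - Q x)‖ := by
    intro x y' hy'
    calc ‖y'‖ = ‖Q (y' + (x - Q x))‖ := by rw [map_add, hQfix y' hy', hQker, add_zero]
      _ ≤ ‖y' + (x - Q x)‖ := hQc _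
  ext x
  have hPx : P x ∈ Y := by rw [← SetLike.mem_coe, ← hPr]; exact Set.mem_range_self x
  have hQx : Q x ∈ Y := by rw [← SetLike.mem_coe, ← hQr]; exact Set.mem_range_self x
  have hz : P x - Q x ∈ Y := Y.sub_mem hPx hQx
  have h1 : inner (𝕜 := A) (x - P x) (P x - Q x) = 0 :=
    stmt3_ortho_aux Y hYmod (x - P x) (huP x) _ hz
  have h2 : inner (𝕜 := A) (x - Q x) (P x - Q x) = 0 :=
    stmt3_ortho_aux Y hYmod (x - Q x) (huQ x) _ hz
  have h3 : inner (𝕜 := A) (P x - Q x) (P x - Q x) = 0 := by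
    have e : inner (𝕜 := A) (P x - Q x) (P x - Q x)
        = inner (𝕜 := A) ((x - Q x) - (x - P x)) (P x - Q x) := by
      congr 1
      abel
    rw [e, CStarModuleOld.inner_sub_left, h1, h2, sub_zero]
  have := (CStarModuleOld.inner_self (A := A) (x := (P x - Q x : E))).mp h3
  exact sub_eq_zero.mp this
end

section
/- Let A be a C*-algebra, let E be a right Hilbert C*-module over A, and let Y ⊆ E be a closed A-submodule. If P : E → E is a linear map with P∘P = P, ‖P(x)‖ ≤ ‖x‖ for all x ∈ E, and range P = Y, then P is an adjointable A-module map: P(x·a) = P(x)·a for all x ∈ E and a ∈ A, and ⟪P(x), y⟫ = ⟪x, P(y)⟫ for all x, y ∈ E. In particular Y is orthogonally complemented in E. -/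
open scoped RightActions

/-- The December 2024 Mathlib `CStarModule` (right Hilbert C*-module, `SMul Aᵐᵒᵖ E`),
restored verbatim under a new name since Mathlib's `CStarModule` is now a left module. -/
class CStarModuleRight (A : outParam <| Type*) (E : Type*) [NonUnitalSemiring A] [StarRing A]
    [Module ℂ A] [AddCommGroup E] [Module ℂ E] [PartialOrder A] [SMul Aᵐᵒᵖ E] [Norm A] [Norm E]
    extends Inner A E where
  inner_add_right {x} {y} {z} : inner x (y + z) = inner x y + inner x z
  inner_self_nonneg {x} : 0 ≤ inner x x
  inner_self {x} : inner x x = 0 ↔ x = 0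
  inner_op_smul_right {a : A} {x y : E} : inner x (y <• a) = inner x y * a
  inner_smul_right_complex {z : ℂ} {x} {y} : inner x (z • y) = z • inner x y
  star_inner x y : star (inner x y) = inner y x
  norm_eq_sqrt_norm_inner_self x : ‖x‖ = √‖inner x x‖

namespace CStarModuleRight

variable {A E : Type*} [NonUnitalCStarAlgebra A] [PartialOrder A] [StarOrderedRing A]
    [NormedAddCommGroup E] [Module ℂ E] [SMul Aᵐᵒᵖ E] [CStarModuleRight A E]

lemma inner_add_left {x y z : E} :
    inner (𝕜 := A) (x + y) z = inner (𝕜 := A) x z + inner (𝕜 := A) y z := by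
  rw [← star_inner z (x + y), inner_add_right, star_add, star_inner, star_inner]

lemma inner_op_smul_left {a : A} {x y : E} :
    inner (𝕜 := A) (x <• a) y = star a * inner (𝕜 := A) x y := by
  rw [← star_inner y, inner_op_smul_right, star_mul, star_inner]

lemma inner_smul_left_complex {z : ℂ} {x y : E} :
    inner (𝕜 := A) (z • x) y = star z • inner (𝕜 := A) x y := by
  rw [← star_inner y, inner_smul_right_complex, star_smul, star_inner]

lemma inner_smul_left_real {z : ℝ} {x y : E} :
    inner (𝕜 := A) (z • x) y = z • inner (𝕜 := A) x y := by
  have h₁ : z • x = (z : ℂ) • x := by simp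
  rw [h₁, inner_smul_left_complex]
  simp

lemma inner_smul_right_real {z : ℝ} {x y : E} :
    inner (𝕜 := A) x (z • y) = z • inner (𝕜 := A) x y := by
  have h₁ : z • y = (z : ℂ) • y := by simp
  rw [h₁, inner_smul_right_complex]
  simp

lemma inner_sub_right {x y z : E} :
    inner (𝕜 := A) x (y - z) = inner (𝕜 := A) x y - inner (𝕜 := A) x z := by
  have h : inner (𝕜 := A) x (y - z) + inner (𝕜 := A) x z = inner (𝕜 := A) x y := by
    rw [← inner_add_right, sub_add_cancel]
  exact eq_sub_of_add_eq h

lemma inner_sub_left {x y z : E} :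
    inner (𝕜 := A) (x - y) z = inner (𝕜 := A) x z - inner (𝕜 := A) y z := by
  have h : inner (𝕜 := A) (x - y) z + inner (𝕜 := A) y z = inner (𝕜 := A) x z := by
    rw [← inner_add_left, sub_add_cancel]
  exact eq_sub_of_add_eq h

lemma inner_zero_right {x : E} : inner (𝕜 := A) x 0 = 0 := by
  have h := inner_sub_right (A := A) (x := x) (y := 0) (z := 0)
  rwa [sub_self, sub_self] at h

lemma inner_zero_left {x : E} : inner (𝕜 := A) 0 x = 0 := by
  have h := inner_sub_left (A := A) (x := 0) (y := 0) (z := x)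
  rwa [sub_self, sub_self] at h

lemma norm_sq_eq {x : E} : ‖x‖ ^ 2 = ‖inner (𝕜 := A) x x‖ := by
  rw [norm_eq_sqrt_norm_inner_self (A := A) x, Real.sq_sqrt (norm_nonneg _)]

lemma inner_mul_inner_swap_le {x y : E} :
    inner (𝕜 := A) y x * inner (𝕜 := A) x y ≤ ‖x‖ ^ 2 • inner (𝕜 := A) y y := by
  rcases eq_or_ne x 0 with h | h
  · subst h
    rw [inner_zero_left, inner_zero_right, zero_mul]
    exact smul_nonneg (by positivity) inner_self_nonneg
  · set b := inner (𝕜 := A) x y with hbdef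
    have hb : inner (𝕜 := A) y x = star b := (star_inner x y).symm
    have h₁ : (0:A) ≤ star b * inner (𝕜 := A) x x * b - ‖x‖ ^ 2 • (star b * b)
        - ‖x‖ ^ 2 • (star b * b) + ‖x‖ ^ 2 • (‖x‖ ^ 2 • inner (𝕜 := A) y y) := by
      have h0 := inner_self_nonneg (A := A) (x := x <• b - ‖x‖ ^ 2 • y)
      convert h0 using 1
      simp only [inner_sub_right, inner_sub_left, inner_op_smul_right, inner_op_smul_left,
        inner_smul_left_real, inner_smul_right_real, ← hbdef, hb, mul_sub, sub_mul, smul_sub,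
        mul_smul_comm, smul_mul_assoc, mul_assoc]
      abel
    have h2 : star b * inner (𝕜 := A) x x * b ≤ ‖x‖ ^ 2 • (star b * b) := by
      rw [norm_sq_eq (A := A)]
      exact CStarAlgebra.star_left_conjugate_le_norm_smul (.of_nonneg inner_self_nonneg)
    have h3 : ‖x‖ ^ 2 • (star b * b) ≤ ‖x‖ ^ 2 • (‖x‖ ^ 2 • inner (𝕜 := A) y y) := by
      have := add_le_add h₁ h2
      rw [← sub_nonneg]
      convert (sub_nonneg.mpr this) using 1
      abel
    rw [hb]
    exact (smul_le_smul_iff_of_pos_left (pow_pos (norm_pos_iff.mpr h) 2)).mp h3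

end CStarModuleRight

section Aux

lemma my_norm_le_max_of_le {B : Type*} [CStarAlgebra B] [PartialOrder B] [StarOrderedRing B]
    {h : B} (hsa : IsSelfAdjoint h) {α β : ℝ} (hα : 0 ≤ α)
    (h1 : -(algebraMap ℝ B α) ≤ h) (h2 : h ≤ algebraMap ℝ B β) : ‖h‖ ≤ max α β := by
  obtain (hsub | hnt) := subsingleton_or_nontrivial B
  · simp [Subsingleton.elim h 0, le_max_iff, hα]
  rcases CStarAlgebra.norm_or_neg_norm_mem_spectrum hsa with hm | hm
  · exact le_max_of_le_right <| (le_algebraMap_iff_spectrum_le (a := h) hsa).mp h2 _ hm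
  · refine le_max_of_le_left ?_
    have h1' : algebraMap ℝ B (-α) ≤ h := by rwa [map_neg]
    have := (algebraMap_le_iff_le_spectrum (a := h) hsa).mp h1' _ hm
    linarith

variable {A E : Type*} [NonUnitalCStarAlgebra A] [PartialOrder A] [StarOrderedRing A]
    [NormedAddCommGroup E] [Module ℂ E] [SMul Aᵐᵒᵖ E] [CStarModuleRight A E]

open CStarModuleRight Unitization in
set_option maxHeartbeats 1000000 in
lemma my_key_orth (P : E →ₗ[ℂ] E) (hPc : ∀ x, ‖P x‖ ≤ ‖x‖) (y z : E)
    (hfix : ∀ b : A, P (y <• b) = y <• b) (hz : P z = 0) :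
    inner (𝕜 := A) y z = 0 := by
  set a : A := inner (𝕜 := A) y z with ha
  set g : A := inner (𝕜 := A) y y with hg
  set k : A := inner (𝕜 := A) z z with hk
  set p : A := star a * a with hp
  set q : A := star a * g * a with hq
  by_contra hne
  have hpne : p ≠ 0 := fun h => hne (by rwa [CStarRing.star_mul_self_eq_zero_iff] at h)
  have hg0 : (0 : A) ≤ g := inner_self_nonneg
  have hk0 : (0 : A) ≤ k := inner_self_nonneg
  have hq0 : (0 : A) ≤ q := star_left_conjugate_nonneg hg0 a
  have hp0 : (0 : A) ≤ p := star_mul_self_nonneg a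
  have sa_p : IsSelfAdjoint p := .of_nonneg hp0
  have sa_q : IsSelfAdjoint q := .of_nonneg hq0
  have sa_k : IsSelfAdjoint k := .of_nonneg hk0
  -- p * p ≤ ‖z‖ ^ 2 • q
  have hswap : a * star a ≤ ‖z‖ ^ 2 • g := by
    have := inner_mul_inner_swap_le (A := A) (x := z) (y := y)
    rwa [← star_inner y z, ← ha, ← hg] at this
  have hpp : p * p ≤ ‖z‖ ^ 2 • q := by
    have h2 := star_left_conjugate_le_conjugate hswap a
    calc p * p = star a * (a * star a) * a := by rw [hp]; noncomm_ring
      _ ≤ star a * (‖z‖ ^ 2 • g) * a := h2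
      _ = ‖z‖ ^ 2 • q := by rw [hq]; rw [mul_smul_comm, smul_mul_assoc]
  have hqne : q ≠ 0 := by
    intro h0
    rw [h0, smul_zero] at hpp
    have : p * p = 0 := le_antisymm hpp (by simpa [sa_p.star_eq] using star_mul_self_nonneg p)
    have h2 : star p * p = 0 := by rw [sa_p.star_eq]; exact this
    exact hpne <| by rwa [CStarRing.star_mul_self_eq_zero_iff] at h2
  have hgne : g ≠ 0 := by
    intro h0
    exact hqne (by simp [hq, h0])
  have hqn : (0:ℝ) < ‖q‖ := norm_pos_iff.mpr hqne
  have hgn : (0:ℝ) < ‖g‖ := norm_pos_iff.mpr hgne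
  -- the contraction inequality
  have hcontr : ∀ s : ℝ, ‖q‖ ≤ ‖q - (2*s) • p + (s^2) • k‖ := by
    intro s
    have hcon := hPc ((y <• (-a)) + s • z)
    rw [map_add, hfix (-a), LinearMap.map_smul_of_tower, hz, smul_zero, add_zero] at hcon
    have h1 : ‖y <• (-a)‖ ^ 2 = ‖q‖ := by
      rw [norm_sq_eq]
      congr 1
      simp only [inner_op_smul_left, inner_op_smul_right, star_neg, neg_mul, mul_neg, neg_neg,
        ← hg, hq, mul_assoc]
    have h2 : inner (𝕜 := A) ((y <• (-a)) + s • z) ((y <• (-a)) + s • z)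
        = q - (2*s) • p + (s^2) • k := by
      simp only [CStarModuleRight.inner_add_right, CStarModuleRight.inner_add_left, inner_op_smul_left, inner_op_smul_right,
        inner_smul_right_real, inner_smul_left_real, star_neg, neg_mul, mul_neg, neg_neg,
        mul_smul_comm, smul_mul_assoc, add_mul, mul_assoc, ← ha, ← hg, ← hk, ← star_inner y z]
      rw [hq, hp, mul_assoc]
      module
    have h3 : ‖y <• (-a)‖ ^ 2 ≤ ‖(y <• (-a)) + s • z‖ ^ 2 :=
      pow_le_pow_left₀ (norm_nonneg _) hcon 2
    rw [h1, norm_sq_eq, h2] at h3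
    exact h3
  -- choose s
  set D : ℝ := 2*‖p‖ + ‖g‖*‖k‖ + 1 with hD
  have hDpos : 0 < D := by positivity
  set s : ℝ := min (‖g‖/2) (‖q‖ / D) with hs
  have hs0 : 0 < s := lt_min (by positivity) (by positivity)
  have hsg : 2 * s ≤ ‖g‖ := by
    have := min_le_left (‖g‖/2) (‖q‖ / D)
    rw [← hs] at this; linarith
  have hsD : s * D ≤ ‖q‖ := by
    have := min_le_right (‖g‖/2) (‖q‖ / D)
    rw [← hs] at this
    exact (le_div_iff₀ hDpos).mp this
  set ε : ℝ := 2*s/‖g‖ with hε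
  have hε0 : 0 < ε := by positivity
  have hε1 : ε ≤ 1 := by rw [hε, div_le_one hgn]; exact hsg
  have hεg : ε * ‖g‖ = 2 * s := by rw [hε]; field_simp
  set h_s : A := q - (2*s) • p + (s^2) • k with hhs
  have sa_h : IsSelfAdjoint h_s := ((sa_q.sub ((IsSelfAdjoint.all (2*s)).smul sa_p)).add ((IsSelfAdjoint.all (s^2)).smul sa_k))
  -- lower bound in A
  have hlbA : -((2*s) • p) ≤ h_s := by
    have h' : (0:A) ≤ q + (s^2) • k := add_nonneg hq0 (smul_nonneg (sq_nonneg s) hk0)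
    have heq : -((2*s) • p) = h_s - (q + (s^2) • k) := by rw [hhs]; module
    rw [heq]
    calc h_s - (q + (s^2) • k) ≤ h_s - 0 := by exact sub_le_sub_left h' _
      _ = h_s := by rw [sub_zero]
  -- upper bound in A
  have hubA : h_s ≤ (1-ε) • q + (s^2) • k := by
    have hqg : q ≤ ‖g‖ • p := by
      have := CStarAlgebra.star_left_conjugate_le_norm_smul (a := a) (b := g) (.of_nonneg hg0)
      rwa [← hq, ← hp] at this
    have h1 : ε • q ≤ (2*s) • p := by
      calc ε • q ≤ ε • (‖g‖ • p) := smul_le_smul_of_nonneg_left hqg hε0.le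
        _ = (ε * ‖g‖) • p := by rw [smul_smul]
        _ = (2*s) • p := by rw [hεg]
    have heq : (1-ε) • q + (s^2) • k = h_s + ((2*s) • p - ε • q) := by rw [hhs]; module
    rw [heq]
    calc h_s = h_s + 0 := by rw [add_zero]
      _ ≤ h_s + ((2*s) • p - ε • q) := add_le_add_right (sub_nonneg.mpr h1) h_s
  -- move to the unitization
  have sa_lb : IsSelfAdjoint (-((2*s) • p)) := ((IsSelfAdjoint.all (2*s)).smul sa_p).neg
  have sa_ub : IsSelfAdjoint ((1-ε) • q + (s^2) • k) := ((IsSelfAdjoint.all (1-ε)).smul sa_q).add ((IsSelfAdjoint.all (s^2)).smul sa_k)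
  have hlbB := (Unitization.inr_le_iff _ _ sa_lb sa_h).mpr hlbA
  have hubB := (Unitization.inr_le_iff _ _ sa_h sa_ub).mpr hubA
  have hub2 : ((((1-ε) • q + (s^2) • k : A)) : Unitization ℂ A)
      ≤ algebraMap ℝ (Unitization ℂ A) ((1-ε)*‖q‖ + s^2*‖k‖) := by
    have e1 : ((q : A) : Unitization ℂ A) ≤ algebraMap ℝ (Unitization ℂ A) ‖q‖ := by
      have := IsSelfAdjoint.le_algebraMap_norm_self (a := ((q : A) : Unitization ℂ A)) (sa_q.inr ℂ)
      rwa [norm_inr] at this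
    have e2 : ((k : A) : Unitization ℂ A) ≤ algebraMap ℝ (Unitization ℂ A) ‖k‖ := by
      have := IsSelfAdjoint.le_algebraMap_norm_self (a := ((k : A) : Unitization ℂ A)) (sa_k.inr ℂ)
      rwa [norm_inr] at this
    have e3 : (1-ε) • ((q : A) : Unitization ℂ A) ≤ (1-ε) • algebraMap ℝ (Unitization ℂ A) ‖q‖ :=
      smul_le_smul_of_nonneg_left e1 (by linarith)
    have e4 : (s^2) • ((k : A) : Unitization ℂ A) ≤ (s^2) • algebraMap ℝ (Unitization ℂ A) ‖k‖ :=
      smul_le_smul_of_nonneg_left e2 (sq_nonneg s)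
    have := add_le_add e3 e4
    rw [inr_add, inr_smul, inr_smul]
    convert this using 1
    simp only [Algebra.algebraMap_eq_smul_one, smul_smul, ← add_smul]
  have hlb2 : -(algebraMap ℝ (Unitization ℂ A) (2*s*‖p‖)) ≤ ((-((2*s) • p) : A) : Unitization ℂ A) := by
    have e1 : ((p : A) : Unitization ℂ A) ≤ algebraMap ℝ (Unitization ℂ A) ‖p‖ := by
      have := IsSelfAdjoint.le_algebraMap_norm_self (a := ((p : A) : Unitization ℂ A)) (sa_p.inr ℂ)
      rwa [norm_inr] at this
    have e3 : (2*s) • ((p : A) : Unitization ℂ A) ≤ (2*s) • algebraMap ℝ (Unitization ℂ A) ‖p‖ :=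
      smul_le_smul_of_nonneg_left e1 (by linarith)
    rw [inr_neg, inr_smul]
    refine neg_le_neg ?_
    calc (2*s) • ((p : A) : Unitization ℂ A) ≤ (2*s) • algebraMap ℝ (Unitization ℂ A) ‖p‖ := e3
      _ = algebraMap ℝ (Unitization ℂ A) (2*s*‖p‖) := by
        simp only [Algebra.algebraMap_eq_smul_one, smul_smul]
  have hnorm : ‖h_s‖ ≤ max (2*s*‖p‖) ((1-ε)*‖q‖ + s^2*‖k‖) := by
    have := my_norm_le_max_of_le (h := ((h_s : A) : Unitization ℂ A)) (sa_h.inr ℂ)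
      (by positivity) (hlb2.trans hlbB) (hubB.trans hub2)
    rwa [norm_inr] at this
  -- numeric contradiction
  have hfin := (hcontr s).trans hnorm
  have hpn : (0:ℝ) ≤ ‖p‖ := norm_nonneg _
  have hkn : (0:ℝ) ≤ ‖k‖ := norm_nonneg _
  have hsD' : s * (2*‖p‖+‖g‖*‖k‖+1) ≤ ‖q‖ := by rw [← hD]; exact hsD
  have c1 : 2*s*‖p‖ < ‖q‖ := by
    nlinarith [mul_nonneg (mul_nonneg hs0.le hgn.le) hkn]
  have key2 : s*‖k‖*‖g‖ < 2*‖q‖ := by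
    nlinarith [mul_nonneg hs0.le hpn]
  have c2 : (1-ε)*‖q‖ + s^2*‖k‖ < ‖q‖ := by
    have h5 : s^2*‖k‖ < ε*‖q‖ := by nlinarith [mul_lt_mul_of_pos_left key2 hs0]
    nlinarith
  rcases max_cases (2*s*‖p‖) ((1-ε)*‖q‖ + s^2*‖k‖) with ⟨hmax, _⟩ | ⟨hmax, _⟩ <;>
    rw [hmax] at hfin <;> linarith

end Aux

/-- Let `E` be a right Hilbert C*-module over a C*-algebra `A` and `Y ⊆ E` a
closed `A`-submodule.  If `P : E → E` is a contractive linear idempotent with `range P = Y`,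
then `P` is an adjointable `A`-module map: `P(x·a) = P(x)·a` and `⟪Px, y⟫ = ⟪x, Py⟫`.
In particular `Y` is orthogonally complemented in `E`. -/
theorem stmt_4 {A E : Type*} [NonUnitalCStarAlgebra A] [PartialOrder A] [StarOrderedRing A]
    [NormedAddCommGroup E] [Module ℂ E] [SMul Aᵐᵒᵖ E] [CStarModuleRight A E] [CompleteSpace E]
    (Y : Submodule ℂ E) (hYclosed : IsClosed (Y : Set E))
    (hYmod : ∀ y ∈ Y, ∀ a : A, y <• a ∈ Y)
    (P : E →ₗ[ℂ] E)
    (hP2 : ∀ x, P (P x) = P x)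
    (hPc : ∀ x, ‖P x‖ ≤ ‖x‖)
    (hPr : Set.range P = (Y : Set E)) :
    (∀ (x : E) (a : A), P (x <• a) = P x <• a) ∧
    (∀ x y : E, inner (𝕜 := A) (P x) y = inner (𝕜 := A) x (P y)) ∧
    (∀ x : E, ∃ y z : E, y ∈ Y ∧ (∀ w ∈ Y, inner (𝕜 := A) w z = 0) ∧ x = y + z) := by
  have hfix : ∀ y, y ∈ Y → P y = y := by
    intro y hy
    have hy' : y ∈ Set.range P := by rw [hPr]; exact hy
    obtain ⟨v, rfl⟩ := hy'
    exact hP2 v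
  have hmem : ∀ x : E, P x ∈ Y := fun x => by
    have : P x ∈ Set.range P := ⟨x, rfl⟩
    rwa [hPr] at this
  have hker : ∀ x : E, P (x - P x) = 0 := fun x => by rw [map_sub, hP2, sub_self]
  have key : ∀ w, w ∈ Y → ∀ z, P z = 0 → inner (𝕜 := A) w z = 0 := fun w hw z hz =>
    my_key_orth P hPc w z (fun b => hfix _ (hYmod w hw b)) hz
  refine ⟨?_, ?_, ?_⟩
  · intro x a
    set d : E := P (x <• a) - (P x <• a) with hd
    have hdY : d ∈ Y := Y.sub_mem (hmem _) (hYmod _ (hmem x) a)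
    have h1 : inner (𝕜 := A) d (x <• a - P (x <• a)) = 0 := key d hdY _ (hker _)
    have h2 : inner (𝕜 := A) d (x - P x) = 0 := key d hdY _ (hker x)
    rw [CStarModuleRight.inner_sub_right, sub_eq_zero] at h1 h2
    have hdd : inner (𝕜 := A) d d = 0 := by
      rw [hd, CStarModuleRight.inner_sub_right, ← h1, CStarModuleRight.inner_op_smul_right,
        CStarModuleRight.inner_op_smul_right, ← h2, sub_self]
    have : d = 0 := CStarModuleRight.inner_self.mp hdd
    rw [hd] at this
    exact sub_eq_zero.mp this
  · intro x y
    have e1 : inner (𝕜 := A) (P x) (y - P y) = 0 := key _ (hmem x) _ (hker y)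
    have e2 : inner (𝕜 := A) (P y) (x - P x) = 0 := key _ (hmem y) _ (hker x)
    have e2' : inner (𝕜 := A) (x - P x) (P y) = 0 := by
      rw [← CStarModuleRight.star_inner, e2, star_zero]
    rw [CStarModuleRight.inner_sub_right, sub_eq_zero] at e1
    rw [CStarModuleRight.inner_sub_left, sub_eq_zero] at e2'
    rw [e1, e2']
  · intro x
    exact ⟨P x, x - P x, hmem x, fun w hw => key w hw _ (hker x), by abel⟩
end

section
/- Let B be a C*-algebra, X a closed linear subspace of B, and P : X → X a linear idempotent. Then P is both a complete left M-projection and a complete right M-projection if and only if P is a complete M-projection, i.e., for every n ≥ 1 and every n×n matrix x over X, ‖x‖ = max(‖Pₙx‖, ‖x − Pₙx‖) in Mₙ(B). -/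
open Matrix

namespace Stmt5Aux

variable {A : Type*} [NonUnitalCStarAlgebra A]

lemma norm_mul_self {y : A} (hy : _root_.IsSelfAdjoint y) : ‖y * y‖ = ‖y‖ ^ 2 := by
  have h : y * y = star y * y := by rw [hy.star_eq]
  rw [h, CStarRing.norm_star_mul_self, sq]

lemma orth_norm_add {p q : A} (hp : _root_.IsSelfAdjoint p) (hq : _root_.IsSelfAdjoint q)
    (hpq : p * q = 0) (hqp : q * p = 0) : ‖p + q‖ = max ‖p‖ ‖q‖ := by
  have keyle : ∀ r s : A, _root_.IsSelfAdjoint r → r * s = 0 → ‖r‖ ≤ ‖r + s‖ := by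
    intro r s hr h
    rcases eq_or_lt_of_le (norm_nonneg r) with h0 | h0
    · rw [← h0]; exact norm_nonneg _
    · have h1 : r * (r + s) = r * r := by rw [mul_add, h, add_zero]
      have h2 : ‖r‖ ^ 2 = ‖r * (r + s)‖ := by rw [h1, norm_mul_self hr]
      have h3 : ‖r * (r + s)‖ ≤ ‖r‖ * ‖r + s‖ := norm_mul_le _ _
      nlinarith
  have hle : max ‖p‖ ‖q‖ ≤ ‖p + q‖ := by
    refine max_le (keyle p q hp hpq) ?_
    rw [add_comm]; exact keyle q p hq hqp
  refine le_antisymm ?_ hle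
  set M := max ‖p‖ ‖q‖ with hM
  have hM0 : 0 ≤ M := le_trans (norm_nonneg p) (le_max_left _ _)
  have key : ∀ k : ℕ, ∃ p' q' : A, _root_.IsSelfAdjoint p' ∧ _root_.IsSelfAdjoint q' ∧ p' * q' = 0 ∧
      q' * p' = 0 ∧ ‖p'‖ = ‖p‖ ^ 2 ^ k ∧ ‖q'‖ = ‖q‖ ^ 2 ^ k ∧
      ‖p' + q'‖ = ‖p + q‖ ^ 2 ^ k := by
    intro k
    induction k with
    | zero => exact ⟨p, q, hp, hq, hpq, hqp, by simp, by simp, by simp⟩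
    | succ k ih =>
      obtain ⟨p', q', hp', hq', hpq', hqp', hnp, hnq, hnpq⟩ := ih
      have hsp : _root_.IsSelfAdjoint (p' * p') :=
        show star (p' * p') = p' * p' by rw [StarMul.star_mul, hp'.star_eq]
      have hsq : _root_.IsSelfAdjoint (q' * q') :=
        show star (q' * q') = q' * q' by rw [StarMul.star_mul, hq'.star_eq]
      have ho1 : (p' * p') * (q' * q') = 0 := by
        rw [mul_assoc, ← mul_assoc p' q' q', hpq', zero_mul, mul_zero]
      have ho2 : (q' * q') * (p' * p') = 0 := by
        rw [mul_assoc, ← mul_assoc q' p' p', hqp', zero_mul, mul_zero]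
      have hsum : p' * p' + q' * q' = (p' + q') * (p' + q') := by
        rw [add_mul, mul_add, mul_add, hpq', hqp', add_zero, zero_add]
      refine ⟨p' * p', q' * q', hsp, hsq, ho1, ho2, ?_, ?_, ?_⟩
      · rw [norm_mul_self hp', hnp, ← pow_mul, ← pow_succ]
      · rw [norm_mul_self hq', hnq, ← pow_mul, ← pow_succ]
      · rw [hsum, norm_mul_self (hp'.add hq'), hnpq, ← pow_mul, ← pow_succ]
  have bound : ∀ k : ℕ, ‖p + q‖ ^ 2 ^ k ≤ 2 * M ^ 2 ^ k := by
    intro k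
    obtain ⟨p', q', _, _, _, _, hnp, hnq, hnpq⟩ := key k
    calc ‖p + q‖ ^ 2 ^ k = ‖p' + q'‖ := hnpq.symm
      _ ≤ ‖p'‖ + ‖q'‖ := norm_add_le _ _
      _ = ‖p‖ ^ 2 ^ k + ‖q‖ ^ 2 ^ k := by rw [hnp, hnq]
      _ ≤ M ^ 2 ^ k + M ^ 2 ^ k := by
          gcongr
          · exact le_max_left _ _
          · exact le_max_right _ _
      _ = 2 * M ^ 2 ^ k := by ring
  by_contra hlt
  push_neg at hlt
  have hMp : 0 < M := by
    rcases lt_or_eq_of_le hM0 with h | h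
    · exact h
    · exfalso
      have h2 : ‖p + q‖ ≤ 0 := by
        calc ‖p + q‖ ≤ ‖p‖ + ‖q‖ := norm_add_le _ _
          _ ≤ M + M := add_le_add (le_max_left _ _) (le_max_right _ _)
          _ = 0 := by rw [← h]; ring
      rw [← h] at hlt
      linarith
  set r := ‖p + q‖ / M with hr
  have hr1 : 1 < r := (one_lt_div hMp).2 hlt
  have hrk : ∀ k : ℕ, r ^ 2 ^ k ≤ 2 := by
    intro k
    rw [hr, div_pow, div_le_iff₀ (pow_pos hMp _)]
    calc ‖p + q‖ ^ 2 ^ k ≤ 2 * M ^ 2 ^ k := bound k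
      _ = 2 * M ^ 2 ^ k := rfl
  obtain ⟨N, hN⟩ := exists_nat_gt (1 / (r - 1))
  have hrpos : (0 : ℝ) < r - 1 := by linarith
  have h1 : (1 : ℝ) < (N : ℝ) * (r - 1) := by
    rw [div_lt_iff₀ hrpos] at hN
    linarith
  have h2 : (N : ℝ) ≤ ((2 ^ N : ℕ) : ℝ) := by
    exact_mod_cast (Nat.lt_two_pow_self (n := N)).le
  have h3 : 1 + ((2 ^ N : ℕ) : ℝ) * (r - 1) ≤ r ^ (2 ^ N) := by
    have := one_add_mul_le_pow (by linarith : (-2 : ℝ) ≤ r - 1) (2 ^ N)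
    simpa using this
  have h4 := hrk N
  have h5 : (N : ℝ) * (r - 1) ≤ ((2 ^ N : ℕ) : ℝ) * (r - 1) :=
    mul_le_mul_of_nonneg_right h2 (by linarith)
  linarith

end Stmt5Aux

open Matrix

namespace Stmt5Corner

variable {B : Type*} [NonUnitalCStarAlgebra B] {n : ℕ}
  {M1 M2 : Type*} [NonUnitalCStarAlgebra M1] [NonUnitalCStarAlgebra M2]

/-- abbreviation for the reindexing function -/
abbrev es (n : ℕ) : Fin (n + n) → Fin n ⊕ Fin n :=
  ⇑(finSumFinEquiv (m := n) (n := n)).symm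

lemma FB_mul (A₁ B₁ C₁ D₁ A₂ B₂ C₂ D₂ : Matrix (Fin n) (Fin n) B) :
    (fromBlocks A₁ B₁ C₁ D₁).submatrix (es n) (es n) *
      (fromBlocks A₂ B₂ C₂ D₂).submatrix (es n) (es n)
    = (fromBlocks (A₁ * A₂ + B₁ * C₂) (A₁ * B₂ + B₁ * D₂) (C₁ * A₂ + D₁ * C₂)
        (C₁ * B₂ + D₁ * D₂)).submatrix (es n) (es n) := by
  rw [show ((fromBlocks A₁ B₁ C₁ D₁).submatrix (es n) (es n) *
      (fromBlocks A₂ B₂ C₂ D₂).submatrix (es n) (es n)) =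
      ((fromBlocks A₁ B₁ C₁ D₁ * fromBlocks A₂ B₂ C₂ D₂).submatrix (es n) (es n)) from
    submatrix_mul_equiv _ _ _ _ _, fromBlocks_multiply]

lemma FB_add (A₁ B₁ C₁ D₁ A₂ B₂ C₂ D₂ : Matrix (Fin n) (Fin n) B) :
    (fromBlocks A₁ B₁ C₁ D₁).submatrix (es n) (es n) +
      (fromBlocks A₂ B₂ C₂ D₂).submatrix (es n) (es n)
    = (fromBlocks (A₁ + A₂) (B₁ + B₂) (C₁ + C₂) (D₁ + D₂)).submatrix (es n) (es n) := by
  rw [← fromBlocks_add]; rfl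

lemma FB_sub (A₁ B₁ C₁ D₁ A₂ B₂ C₂ D₂ : Matrix (Fin n) (Fin n) B) :
    (fromBlocks A₁ B₁ C₁ D₁).submatrix (es n) (es n) -
      (fromBlocks A₂ B₂ C₂ D₂).submatrix (es n) (es n)
    = (fromBlocks (A₁ - A₂) (B₁ - B₂) (C₁ - C₂) (D₁ - D₂)).submatrix (es n) (es n) := by
  have h : fromBlocks A₁ B₁ C₁ D₁ - fromBlocks A₂ B₂ C₂ D₂
      = fromBlocks (A₁ - A₂) (B₁ - B₂) (C₁ - C₂) (D₁ - D₂) := by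
    rw [sub_eq_add_neg, fromBlocks_neg, fromBlocks_add]
    simp [sub_eq_add_neg]
  rw [← h]; rfl

lemma FB_star (A₁ B₁ C₁ D₁ : Matrix (Fin n) (Fin n) B) :
    star ((fromBlocks A₁ B₁ C₁ D₁).submatrix (es n) (es n))
    = (fromBlocks (star A₁) (star C₁) (star B₁) (star D₁)).submatrix (es n) (es n) := by
  simp only [Matrix.star_eq_conjTranspose, conjTranspose_submatrix, fromBlocks_conjTranspose]

lemma FB_smul (c : ℂ) (A₁ B₁ C₁ D₁ : Matrix (Fin n) (Fin n) B) :
    c • ((fromBlocks A₁ B₁ C₁ D₁).submatrix (es n) (es n))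
    = (fromBlocks (c • A₁) (c • B₁) (c • C₁) (c • D₁)).submatrix (es n) (es n) := by
  rw [← fromBlocks_smul]; rfl

/-- the upper-left corner embedding at the level of matrices -/
def E1m (c : Matrix (Fin n) (Fin n) B) : Matrix (Fin (n + n)) (Fin (n + n)) B :=
  (fromBlocks c 0 0 0).submatrix (es n) (es n)

/-- the lower-right corner embedding at the level of matrices -/
def E2m (c : Matrix (Fin n) (Fin n) B) : Matrix (Fin (n + n)) (Fin (n + n)) B :=
  (fromBlocks 0 0 0 c).submatrix (es n) (es n)

/-- the upper-left corner embedding as a star algebra homomorphism -/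
def E1hom : Matrix (Fin n) (Fin n) B →⋆ₙₐ[ℂ] Matrix (Fin (n + n)) (Fin (n + n)) B where
  toFun := E1m
  map_smul' c A := by simp only [E1m, MonoidHom.id_apply, FB_smul, smul_zero]
  map_zero' := by simp only [E1m, fromBlocks_zero, submatrix_zero, Pi.zero_apply]
  map_add' A A' := by simp only [E1m, FB_add, add_zero]
  map_mul' A A' := by
    simp only [E1m, FB_mul, Matrix.mul_zero, Matrix.zero_mul, add_zero, zero_add]
  map_star' A := by simp only [E1m, FB_star, star_zero]

/-- the lower-right corner embedding as a star algebra homomorphism -/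
def E2hom : Matrix (Fin n) (Fin n) B →⋆ₙₐ[ℂ] Matrix (Fin (n + n)) (Fin (n + n)) B where
  toFun := E2m
  map_smul' c A := by simp only [E2m, MonoidHom.id_apply, FB_smul, smul_zero]
  map_zero' := by simp only [E2m, fromBlocks_zero, submatrix_zero, Pi.zero_apply]
  map_add' A A' := by simp only [E2m, FB_add, add_zero]
  map_mul' A A' := by
    simp only [E2m, FB_mul, Matrix.mul_zero, Matrix.zero_mul, add_zero, zero_add]
  map_star' A := by simp only [E2m, FB_star, star_zero]

variable (ι₁ : Matrix (Fin n) (Fin n) B ≃⋆ₐ[ℂ] M1)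
  (ι₂ : Matrix (Fin (n + n)) (Fin (n + n)) B ≃⋆ₐ[ℂ] M2)

noncomputable def corner1 : M1 →⋆ₙₐ[ℂ] M2 :=
  ((ι₂ : Matrix (Fin (n + n)) (Fin (n + n)) B →⋆ₙₐ[ℂ] M2).comp E1hom).comp
    (ι₁.symm : M1 →⋆ₙₐ[ℂ] Matrix (Fin n) (Fin n) B)

noncomputable def corner2 : M1 →⋆ₙₐ[ℂ] M2 :=
  ((ι₂ : Matrix (Fin (n + n)) (Fin (n + n)) B →⋆ₙₐ[ℂ] M2).comp E2hom).comp
    (ι₁.symm : M1 →⋆ₙₐ[ℂ] Matrix (Fin n) (Fin n) B)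

lemma norm_corner1 (c : Matrix (Fin n) (Fin n) B) :
    ‖ι₂ ((fromBlocks c 0 0 0).submatrix (es n) (es n))‖ = ‖ι₁ c‖ := by
  have hinj : Function.Injective (corner1 ι₁ ι₂) := by
    intro y y' h
    simp only [corner1, NonUnitalStarAlgHom.comp_apply, NonUnitalStarAlgHom.coe_coe] at h
    have h2 := ι₂.injective h
    have h3 : ι₁.symm y = ι₁.symm y' := by
      ext i j
      rw [← Matrix.ext_iff] at h2
      have h4 := h2 (finSumFinEquiv (Sum.inl i)) (finSumFinEquiv (Sum.inl j))
      change E1m (ι₁.symm y) _ _ = E1m (ι₁.symm y') _ _ at h4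
      simpa [E1hom, E1m, Matrix.submatrix_apply, Equiv.symm_apply_apply,
        fromBlocks_apply₁₁] using h4
    simpa using congrArg ι₁ h3
  have h5 := NonUnitalStarAlgHom.norm_map (corner1 ι₁ ι₂) hinj (ι₁ c)
  simp only [corner1, NonUnitalStarAlgHom.comp_apply, NonUnitalStarAlgHom.coe_coe,
    StarAlgEquiv.symm_apply_apply, E1hom, NonUnitalStarAlgHom.coe_mk, NonUnitalAlgHom.coe_mk,
    E1m] at h5
  exact h5

lemma norm_corner2 (c : Matrix (Fin n) (Fin n) B) :
    ‖ι₂ ((fromBlocks 0 0 0 c).submatrix (es n) (es n))‖ = ‖ι₁ c‖ := by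
  have hinj : Function.Injective (corner2 ι₁ ι₂) := by
    intro y y' h
    simp only [corner2, NonUnitalStarAlgHom.comp_apply, NonUnitalStarAlgHom.coe_coe] at h
    have h2 := ι₂.injective h
    have h3 : ι₁.symm y = ι₁.symm y' := by
      ext i j
      rw [← Matrix.ext_iff] at h2
      have h4 := h2 (finSumFinEquiv (Sum.inr i)) (finSumFinEquiv (Sum.inr j))
      have h5 : ∀ z : M1, (E2hom (B := B) (n := n)) (ι₁.symm z)
          (finSumFinEquiv (Sum.inr i)) (finSumFinEquiv (Sum.inr j)) = ι₁.symm z i j := by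
        intro z
        show E2m (ι₁.symm z)
          (finSumFinEquiv (Sum.inr i)) (finSumFinEquiv (Sum.inr j)) = _
        simp only [E2m, Matrix.submatrix_apply, Equiv.symm_apply_apply, fromBlocks_apply₂₂]
      rw [h5, h5] at h4
      exact h4
    simpa using congrArg ι₁ h3
  have h5 := NonUnitalStarAlgHom.norm_map (corner2 ι₁ ι₂) hinj (ι₁ c)
  simp only [corner2, NonUnitalStarAlgHom.comp_apply, NonUnitalStarAlgHom.coe_coe,
    StarAlgEquiv.symm_apply_apply, E2hom, NonUnitalStarAlgHom.coe_mk, NonUnitalAlgHom.coe_mk,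
    E2m] at h5
  exact h5

end Stmt5Corner

open Matrix

namespace Stmt5Maps
open Stmt5Corner

variable {B : Type*} [NonUnitalCStarAlgebra B] {X : Submodule ℂ B} (P : X →ₗ[ℂ] X) {n : ℕ}

/-- the row matrix `[[Px, x - Px], [0, 0]]` -/
def zrow (x : Matrix (Fin n) (Fin n) X) : Matrix (Fin (n + n)) (Fin (n + n)) X :=
  (fromBlocks (x.map ⇑P) (x - x.map ⇑P) 0 0).submatrix (es n) (es n)

/-- the column matrix `[[Px, 0], [x - Px, 0]]` -/
def zcol (x : Matrix (Fin n) (Fin n) X) : Matrix (Fin (n + n)) (Fin (n + n)) X :=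
  (fromBlocks (x.map ⇑P) 0 (x - x.map ⇑P) 0).submatrix (es n) (es n)

lemma zrow_map_P (hP : ∀ v, P (P v) = P v) (x : Matrix (Fin n) (Fin n) X) :
    (zrow P x).map (fun v => ((P v : B)))
      = (fromBlocks (x.map fun v => ((P v : B))) 0 0 0).submatrix (es n) (es n) := by
  ext i j
  rcases hsi : es n i with k | k <;> rcases hsj : es n j with l | l <;>
    simp [zrow, Matrix.map_apply, Matrix.submatrix_apply, hsi, hsj, Matrix.sub_apply,
      map_sub, hP, fromBlocks_apply₁₁, fromBlocks_apply₁₂, fromBlocks_apply₂₁,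
      fromBlocks_apply₂₂]

lemma zrow_map_val (x : Matrix (Fin n) (Fin n) X) :
    (zrow P x).map Subtype.val
      = (fromBlocks (x.map fun v => ((P v : B)))
          (x.map Subtype.val - x.map fun v => ((P v : B))) 0 0).submatrix (es n) (es n) := by
  ext i j
  rcases hsi : es n i with k | k <;> rcases hsj : es n j with l | l <;>
    simp [zrow, Matrix.map_apply, Matrix.submatrix_apply, hsi, hsj, Matrix.sub_apply,
      fromBlocks_apply₁₁, fromBlocks_apply₁₂, fromBlocks_apply₂₁, fromBlocks_apply₂₂]

lemma zrow_map_sub (hP : ∀ v, P (P v) = P v) (x : Matrix (Fin n) (Fin n) X) :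
    (zrow P x).map Subtype.val - (zrow P x).map (fun v => ((P v : B)))
      = (fromBlocks 0 (x.map Subtype.val - x.map fun v => ((P v : B))) 0 0).submatrix
          (es n) (es n) := by
  rw [zrow_map_val, zrow_map_P P hP, FB_sub]
  simp

lemma zcol_map_P (hP : ∀ v, P (P v) = P v) (x : Matrix (Fin n) (Fin n) X) :
    (zcol P x).map (fun v => ((P v : B)))
      = (fromBlocks (x.map fun v => ((P v : B))) 0 0 0).submatrix (es n) (es n) := by
  ext i j
  rcases hsi : es n i with k | k <;> rcases hsj : es n j with l | l <;>
    simp [zcol, Matrix.map_apply, Matrix.submatrix_apply, hsi, hsj, Matrix.sub_apply,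
      map_sub, hP, fromBlocks_apply₁₁, fromBlocks_apply₁₂, fromBlocks_apply₂₁,
      fromBlocks_apply₂₂]

lemma zcol_map_val (x : Matrix (Fin n) (Fin n) X) :
    (zcol P x).map Subtype.val
      = (fromBlocks (x.map fun v => ((P v : B))) 0
          (x.map Subtype.val - x.map fun v => ((P v : B))) 0).submatrix (es n) (es n) := by
  ext i j
  rcases hsi : es n i with k | k <;> rcases hsj : es n j with l | l <;>
    simp [zcol, Matrix.map_apply, Matrix.submatrix_apply, hsi, hsj, Matrix.sub_apply,
      fromBlocks_apply₁₁, fromBlocks_apply₁₂, fromBlocks_apply₂₁, fromBlocks_apply₂₂]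

lemma zcol_map_sub (hP : ∀ v, P (P v) = P v) (x : Matrix (Fin n) (Fin n) X) :
    (zcol P x).map Subtype.val - (zcol P x).map (fun v => ((P v : B)))
      = (fromBlocks 0 0 (x.map Subtype.val - x.map fun v => ((P v : B))) 0).submatrix
          (es n) (es n) := by
  rw [zcol_map_val, zcol_map_P P hP, FB_sub]
  simp

end Stmt5Maps
set_option maxHeartbeats 1600000 in
/-- Let `B` be a C*-algebra, `X ⊆ B` a closed linear subspace and `P : X → X`
a linear idempotent.  The C*-algebra `Mₙ(B)` (with its unique C*-norm) is modelled by an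
arbitrary C*-algebra `Mat n` with a ⋆-algebra isomorphism `ι n` from the ⋆-algebra of matrices
`Matrix (Fin n) (Fin n) B`; matrices over `X` inherit this norm.  Then `P` is both a complete
left `M`-projection and a complete right `M`-projection iff `P` is a complete `M`-projection,
i.e. `‖x‖ = max(‖Pₙx‖, ‖x − Pₙx‖)` for every `n ≥ 1` and every `n × n` matrix `x` over `X`. -/
theorem stmt_5 {B : Type*} [NonUnitalCStarAlgebra B]
    (Mat : ℕ → Type*) [∀ n, NonUnitalCStarAlgebra (Mat n)]
    (ι : ∀ n, Matrix (Fin n) (Fin n) B ≃⋆ₐ[ℂ] Mat n)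
    (X : Submodule ℂ B) (hX : IsClosed (X : Set B))
    (P : X →ₗ[ℂ] X) (hP : ∀ x, P (P x) = P x) :
    ((∀ n : ℕ, 1 ≤ n → ∀ x : Matrix (Fin n) (Fin n) X,
        ‖ι n (star (x.map fun v => ((P v : B))) * (x.map fun v => ((P v : B))) +
            star (x.map Subtype.val - x.map fun v => ((P v : B))) *
              (x.map Subtype.val - x.map fun v => ((P v : B))))‖
          = ‖ι n (x.map Subtype.val)‖ ^ 2) ∧
     (∀ n : ℕ, 1 ≤ n → ∀ x : Matrix (Fin n) (Fin n) X,
        ‖ι n ((x.map fun v => ((P v : B))) * star (x.map fun v => ((P v : B))) +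
            (x.map Subtype.val - x.map fun v => ((P v : B))) *
              star (x.map Subtype.val - x.map fun v => ((P v : B))))‖
          = ‖ι n (x.map Subtype.val)‖ ^ 2)) ↔
    (∀ n : ℕ, 1 ≤ n → ∀ x : Matrix (Fin n) (Fin n) X,
        ‖ι n (x.map Subtype.val)‖
          = max ‖ι n (x.map fun v => ((P v : B)))‖
              ‖ι n (x.map Subtype.val - x.map fun v => ((P v : B)))‖) := by
  open Matrix Stmt5Corner Stmt5Maps Stmt5Aux in
  constructor
  · rintro ⟨hL, hR⟩ n hn x
    have h2n : 1 ≤ n + n := le_trans hn (Nat.le_add_right n n)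
    set a : Matrix (Fin n) (Fin n) B := x.map fun v => ((P v : B)) with ha
    set u : Matrix (Fin n) (Fin n) B := x.map Subtype.val with hu
    set b : Matrix (Fin n) (Fin n) B := u - a with hb
    -- goal : ‖ι n u‖ = max ‖ι n a‖ ‖ι n b‖
    have hRn := hR n hn x
    rw [← ha, ← hu, ← hb] at hRn
    have hL2 := hL (n + n) h2n (zrow P x)
    have hR2 := hR (n + n) h2n (zrow P x)
    rw [zrow_map_sub P hP, zrow_map_val, zrow_map_P P hP, ← ha, ← hu, ← hb] at hL2 hR2
    -- compute the interior matrices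
    have hLmat : star ((fromBlocks a 0 0 0).submatrix (es n) (es n)) *
          (fromBlocks a 0 0 0).submatrix (es n) (es n) +
        star ((fromBlocks 0 b 0 0).submatrix (es n) (es n)) *
          (fromBlocks 0 b 0 0).submatrix (es n) (es n)
        = (fromBlocks (star a * a) 0 0 0).submatrix (es n) (es n)
          + (fromBlocks 0 0 0 (star b * b)).submatrix (es n) (es n) := by
      rw [FB_star, FB_star, FB_mul, FB_mul, FB_add, FB_add]
      simp
    have hRmat : (fromBlocks a 0 0 0).submatrix (es n) (es n) *
          star ((fromBlocks a 0 0 0).submatrix (es n) (es n)) +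
        (fromBlocks 0 b 0 0).submatrix (es n) (es n) *
          star ((fromBlocks 0 b 0 0).submatrix (es n) (es n))
        = (fromBlocks (a * star a + b * star b) 0 0 0).submatrix (es n) (es n) := by
      rw [FB_star, FB_star, FB_mul, FB_mul, FB_add]
      simp
    rw [hLmat, _root_.map_add] at hL2
    rw [hRmat] at hR2
    -- `hR2` + corner isometry gives the norm of the big matrix
    have hZ : ‖ι (n + n) ((fromBlocks a b 0 0).submatrix (es n) (es n))‖ ^ 2
        = ‖ι n u‖ ^ 2 := by
      rw [← hR2, norm_corner1 (ι n) (ι (n + n)), hRn]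
    -- the two summands in `hL2` are orthogonal selfadjoint elements
    have hp_sa : IsSelfAdjoint (ι (n + n) ((fromBlocks (star a * a) 0 0 0).submatrix
        (es n) (es n))) := by
      refine show star _ = _ from ?_
      rw [← StarHomClass.map_star, FB_star]
      congr 1
      rw [Matrix.star_mul, star_star]
      simp
    have hq_sa : IsSelfAdjoint (ι (n + n) ((fromBlocks 0 0 0 (star b * b)).submatrix
        (es n) (es n))) := by
      refine show star _ = _ from ?_
      rw [← StarHomClass.map_star, FB_star]
      congr 1
      rw [Matrix.star_mul, star_star]
      simp
    have hpq0 : ι (n + n) ((fromBlocks (star a * a) 0 0 0).submatrix (es n) (es n)) *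
        ι (n + n) ((fromBlocks 0 0 0 (star b * b)).submatrix (es n) (es n)) = 0 := by
      rw [← _root_.map_mul, FB_mul]
      simp
    have hqp0 : ι (n + n) ((fromBlocks 0 0 0 (star b * b)).submatrix (es n) (es n)) *
        ι (n + n) ((fromBlocks (star a * a) 0 0 0).submatrix (es n) (es n)) = 0 := by
      rw [← _root_.map_mul, FB_mul]
      simp
    have horth := orth_norm_add hp_sa hq_sa hpq0 hqp0
    rw [hL2, hZ] at horth
    rw [norm_corner1 (ι n) (ι (n + n)), norm_corner2 (ι n) (ι (n + n)), _root_.map_mul, _root_.map_mul,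
      StarHomClass.map_star, StarHomClass.map_star, CStarRing.norm_star_mul_self, CStarRing.norm_star_mul_self,
      ← sq, ← sq] at horth
    -- now : ‖ι n u‖ ^ 2 = max (‖ι n a‖ ^ 2) (‖ι n b‖ ^ 2)
    have hms : (max ‖ι n a‖ ‖ι n b‖) ^ 2 = max (‖ι n a‖ ^ 2) (‖ι n b‖ ^ 2) := by
      rcases le_total ‖ι n a‖ ‖ι n b‖ with hle | hle
      · rw [max_eq_right hle, max_eq_right (by nlinarith [norm_nonneg (ι n a)])]
      · rw [max_eq_left hle, max_eq_left (by nlinarith [norm_nonneg (ι n b)])]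
    have hsq : ‖ι n u‖ ^ 2 = (max ‖ι n a‖ ‖ι n b‖) ^ 2 := by rw [hms]; exact horth
    exact (sq_eq_sq₀ (norm_nonneg _) (le_max_of_le_left (norm_nonneg _))).1 hsq
  · intro h
    constructor
    · -- left M-projection from complete M-projection, via the column matrix
      intro n hn x
      have h2n : 1 ≤ n + n := le_trans hn (Nat.le_add_right n n)
      set a : Matrix (Fin n) (Fin n) B := x.map fun v => ((P v : B)) with ha
      set u : Matrix (Fin n) (Fin n) B := x.map Subtype.val with hu
      set b : Matrix (Fin n) (Fin n) B := u - a with hb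
      have hn1 := h n hn x
      rw [← ha, ← hu, ← hb] at hn1
      have h2 := h (n + n) h2n (zcol P x)
      rw [zcol_map_sub P hP, zcol_map_val, zcol_map_P P hP, ← ha, ← hu, ← hb] at h2
      -- norms of the two pieces
      have hA : ‖ι (n + n) ((fromBlocks a 0 0 0).submatrix (es n) (es n))‖ = ‖ι n a‖ :=
        norm_corner1 (ι n) (ι (n + n)) a
      have hBsq : ‖ι (n + n) ((fromBlocks 0 0 b 0).submatrix (es n) (es n))‖ ^ 2
          = ‖ι n b‖ ^ 2 := by
        rw [sq, ← CStarRing.norm_star_mul_self, ← StarHomClass.map_star, ← _root_.map_mul, FB_star, FB_mul]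
        have hmat : (fromBlocks (star (0 : Matrix (Fin n) (Fin n) B) * 0 + star b * b)
            (star (0 : Matrix (Fin n) (Fin n) B) * 0 + star b * 0)
            (star (0 : Matrix (Fin n) (Fin n) B) * 0 + star (0 : Matrix (Fin n) (Fin n) B) * b)
            (star (0 : Matrix (Fin n) (Fin n) B) * 0 + star (0 : Matrix (Fin n) (Fin n) B) * 0))
            = fromBlocks (star b * b) 0 0 0 := by simp
        rw [hmat, norm_corner1 (ι n) (ι (n + n)), _root_.map_mul, StarHomClass.map_star,
          CStarRing.norm_star_mul_self, sq]
      have hB : ‖ι (n + n) ((fromBlocks 0 0 b 0).submatrix (es n) (es n))‖ = ‖ι n b‖ :=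
        (sq_eq_sq₀ (norm_nonneg _) (norm_nonneg _)).1 hBsq
      rw [hA, hB, ← hn1] at h2
      -- compute ‖zcol‖² as the norm of star m * m
      have hgoalmat : star ((fromBlocks a 0 b 0).submatrix (es n) (es n)) *
          (fromBlocks a 0 b 0).submatrix (es n) (es n)
          = (fromBlocks (star a * a + star b * b) 0 0 0).submatrix (es n) (es n) := by
        rw [FB_star, FB_mul]
        simp
      have final : ‖ι n (star a * a + star b * b)‖ = ‖ι n u‖ ^ 2 := by
        rw [← norm_corner1 (ι n) (ι (n + n)), ← hgoalmat, _root_.map_mul, StarHomClass.map_star,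
          CStarRing.norm_star_mul_self, ← h2, sq]
      exact final
    · -- right M-projection from complete M-projection, via the row matrix
      intro n hn x
      have h2n : 1 ≤ n + n := le_trans hn (Nat.le_add_right n n)
      set a : Matrix (Fin n) (Fin n) B := x.map fun v => ((P v : B)) with ha
      set u : Matrix (Fin n) (Fin n) B := x.map Subtype.val with hu
      set b : Matrix (Fin n) (Fin n) B := u - a with hb
      have hn1 := h n hn x
      rw [← ha, ← hu, ← hb] at hn1
      have h2 := h (n + n) h2n (zrow P x)
      rw [zrow_map_sub P hP, zrow_map_val, zrow_map_P P hP, ← ha, ← hu, ← hb] at h2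
      have hA : ‖ι (n + n) ((fromBlocks a 0 0 0).submatrix (es n) (es n))‖ = ‖ι n a‖ :=
        norm_corner1 (ι n) (ι (n + n)) a
      have hBsq : ‖ι (n + n) ((fromBlocks 0 b 0 0).submatrix (es n) (es n))‖ ^ 2
          = ‖ι n b‖ ^ 2 := by
        rw [sq, ← CStarRing.norm_star_mul_self, ← StarHomClass.map_star, ← _root_.map_mul, FB_star, FB_mul]
        have hmat : (fromBlocks (star (0 : Matrix (Fin n) (Fin n) B) * 0 + 0 * 0)
            (star (0 : Matrix (Fin n) (Fin n) B) * b + 0 * 0)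
            (star b * 0 + star (0 : Matrix (Fin n) (Fin n) B) * 0)
            (star b * b + star (0 : Matrix (Fin n) (Fin n) B) * 0))
            = fromBlocks 0 0 0 (star b * b) := by simp
        rw [show star (0 : Matrix (Fin n) (Fin n) B) = 0 from star_zero _]
        simp only [Matrix.zero_mul, Matrix.mul_zero, add_zero, zero_add]
        rw [show (fromBlocks (0 : Matrix (Fin n) (Fin n) B) 0 0 (star b * b))
            = fromBlocks 0 0 0 (star b * b) from rfl]
        rw [norm_corner2 (ι n) (ι (n + n)), _root_.map_mul, StarHomClass.map_star,
          CStarRing.norm_star_mul_self, sq]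
      have hB : ‖ι (n + n) ((fromBlocks 0 b 0 0).submatrix (es n) (es n))‖ = ‖ι n b‖ :=
        (sq_eq_sq₀ (norm_nonneg _) (norm_nonneg _)).1 hBsq
      rw [hA, hB, ← hn1] at h2
      have hgoalmat : (fromBlocks a b 0 0).submatrix (es n) (es n) *
          star ((fromBlocks a b 0 0).submatrix (es n) (es n))
          = (fromBlocks (a * star a + b * star b) 0 0 0).submatrix (es n) (es n) := by
        rw [FB_star, FB_mul]
        simp
      have final : ‖ι n (a * star a + b * star b)‖ = ‖ι n u‖ ^ 2 := by
        rw [← norm_corner1 (ι n) (ι (n + n)), ← hgoalmat, _root_.map_mul, StarHomClass.map_star,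
          CStarRing.norm_self_mul_star, ← h2, sq]
      exact final
end

section
/- Let B be a C*-algebra, X a closed linear subspace of B, and P : X → X a linear idempotent. Then P is a complete left M-projection if and only if both of the following hold: (i) for every n ≥ 1 and every n×n matrix x over X, ‖(Pₙx)*(Pₙx) + (x − Pₙx)*(x − Pₙx)‖ ≤ ‖x‖² (the map ν_P^c is completely contractive), and (ii) for every n ≥ 1 and all n×n matrices x, y over X, ‖Pₙx + y − Pₙy‖² ≤ ‖x*x + y*y‖ (the map μ_P^c is completely contractive). -/
lemma aux_norm {A : Type*} [NonUnitalCStarAlgebra A] (p q r s : A) :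
    ‖star p * p + star q * q‖ ≤ ‖star p * p + star q * q + (star r * r + star s * s)‖ := by
  letI : PartialOrder (Unitization ℂ A) := CStarAlgebra.spectralOrder _
  letI : StarOrderedRing (Unitization ℂ A) := CStarAlgebra.spectralOrderedRing _
  have h0 : ∀ u : A, (0 : Unitization ℂ A) ≤ ((star u * u : A) : Unitization ℂ A) := by
    intro u
    rw [Unitization.inr_mul, Unitization.inr_star]
    exact star_mul_self_nonneg _
  have key := CStarAlgebra.norm_le_norm_of_nonneg_of_le
    (a := ((star p * p + star q * q : A) : Unitization ℂ A))
    (b := ((star p * p + star q * q + (star r * r + star s * s) : A) : Unitization ℂ A))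
    (by rw [Unitization.inr_add]; exact add_nonneg (h0 p) (h0 q))
    (by rw [Unitization.inr_add ℂ (star p * p + star q * q)]
        refine le_add_of_nonneg_right ?_
        rw [Unitization.inr_add]; exact add_nonneg (h0 r) (h0 s))
  simpa only [Unitization.norm_inr] using key

noncomputable def cornerHom (B : Type*) [NonUnitalCStarAlgebra B] (n : ℕ) :
    Matrix (Fin n) (Fin n) B →⋆ₙₐ[ℂ] Matrix (Fin (n+n)) (Fin (n+n)) B where
  toFun a := (Matrix.fromBlocks a 0 0 0).submatrix finSumFinEquiv.symm finSumFinEquiv.symm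
  map_smul' c a := by
    have h : (Matrix.fromBlocks (c • a) 0 0 0 : Matrix (Fin n ⊕ Fin n) (Fin n ⊕ Fin n) B)
        = c • Matrix.fromBlocks a 0 0 0 := by
      rw [Matrix.fromBlocks_smul, smul_zero]
    rw [h]; rfl
  map_zero' := by
    rw [Matrix.fromBlocks_zero]; rfl
  map_add' a b := by
    have h : (Matrix.fromBlocks (a + b) 0 0 0 : Matrix (Fin n ⊕ Fin n) (Fin n ⊕ Fin n) B)
        = Matrix.fromBlocks a 0 0 0 + Matrix.fromBlocks b 0 0 0 := by
      rw [Matrix.fromBlocks_add, add_zero]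
    rw [h]; rfl
  map_mul' a b := by
    rw [Matrix.submatrix_mul_equiv _ _ _ finSumFinEquiv.symm _, Matrix.fromBlocks_multiply]
    simp
  map_star' a := by
    have h : (Matrix.fromBlocks (star a) 0 0 0 : Matrix (Fin n ⊕ Fin n) (Fin n ⊕ Fin n) B)
        = star (Matrix.fromBlocks a 0 0 0) := by
      rw [Matrix.star_eq_conjTranspose (Matrix.fromBlocks a 0 0 0),
        Matrix.fromBlocks_conjTranspose]
      simp [Matrix.star_eq_conjTranspose]
    rw [h, Matrix.star_eq_conjTranspose, Matrix.star_eq_conjTranspose,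
      Matrix.conjTranspose_submatrix]

lemma cornerHom_apply {B : Type*} [NonUnitalCStarAlgebra B] {n : ℕ}
    (a : Matrix (Fin n) (Fin n) B) :
    cornerHom B n a
      = (Matrix.fromBlocks a 0 0 0).submatrix finSumFinEquiv.symm finSumFinEquiv.symm := rfl

lemma cornerHom_injective (B : Type*) [NonUnitalCStarAlgebra B] (n : ℕ) :
    Function.Injective (cornerHom B n) := by
  intro a b hab
  have key : ∀ c : Matrix (Fin n) (Fin n) B,
      ((cornerHom B n c).submatrix finSumFinEquiv finSumFinEquiv).toBlocks₁₁ = c := by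
    intro c
    rw [cornerHom_apply, Matrix.submatrix_submatrix]
    simp [Equiv.symm_comp_self]
  rw [← key a, ← key b, hab]

lemma corner_isometry {B : Type*} [NonUnitalCStarAlgebra B] {n : ℕ}
    {An Am : Type*} [NonUnitalCStarAlgebra An] [NonUnitalCStarAlgebra Am]
    (ιn : Matrix (Fin n) (Fin n) B ≃⋆ₐ[ℂ] An)
    (ιm : Matrix (Fin (n+n)) (Fin (n+n)) B ≃⋆ₐ[ℂ] Am)
    (a : Matrix (Fin n) (Fin n) B) :
    ‖ιm ((Matrix.fromBlocks a 0 0 0).submatrix finSumFinEquiv.symm finSumFinEquiv.symm)‖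
      = ‖ιn a‖ := by
  have hφ : Function.Injective
      (((ιm : Matrix (Fin (n+n)) (Fin (n+n)) B →⋆ₙₐ[ℂ] Am).comp
        ((cornerHom B n).comp (ιn.symm : An →⋆ₙₐ[ℂ] Matrix (Fin n) (Fin n) B)))) := by
    intro u v huv
    simp only [NonUnitalStarAlgHom.comp_apply] at huv
    exact ιn.symm.injective <| cornerHom_injective B n <| ιm.injective huv
  have := NonUnitalStarAlgHom.norm_map _ hφ (ιn a)
  simpa [cornerHom_apply] using this

lemma corner_star_mul {B : Type*} [NonUnitalCStarAlgebra B] {n : ℕ}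
    (u v u' v' : Matrix (Fin n) (Fin n) B) :
    star ((Matrix.fromBlocks u 0 v 0 : Matrix (Fin n ⊕ Fin n) (Fin n ⊕ Fin n) B).submatrix
        finSumFinEquiv.symm finSumFinEquiv.symm) *
      ((Matrix.fromBlocks u' 0 v' 0 : Matrix (Fin n ⊕ Fin n) (Fin n ⊕ Fin n) B).submatrix
        finSumFinEquiv.symm finSumFinEquiv.symm)
    = (Matrix.fromBlocks (star u * u' + star v * v') 0 0 0
        : Matrix (Fin n ⊕ Fin n) (Fin n ⊕ Fin n) B).submatrix
        finSumFinEquiv.symm finSumFinEquiv.symm := by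
  rw [Matrix.star_eq_conjTranspose, Matrix.conjTranspose_submatrix,
    Matrix.submatrix_mul_equiv _ _ _ finSumFinEquiv.symm,
    Matrix.fromBlocks_conjTranspose, Matrix.fromBlocks_multiply]
  simp [Matrix.star_eq_conjTranspose]

lemma corner_sub {B : Type*} [NonUnitalCStarAlgebra B] {n : ℕ}
    (u v u' v' : Matrix (Fin n) (Fin n) B) :
    (Matrix.fromBlocks u 0 v 0 : Matrix (Fin n ⊕ Fin n) (Fin n ⊕ Fin n) B).submatrix
        finSumFinEquiv.symm finSumFinEquiv.symm -
      (Matrix.fromBlocks u' 0 v' 0 : Matrix (Fin n ⊕ Fin n) (Fin n ⊕ Fin n) B).submatrix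
        finSumFinEquiv.symm finSumFinEquiv.symm
    = (Matrix.fromBlocks (u - u') 0 (v - v') 0
        : Matrix (Fin n ⊕ Fin n) (Fin n ⊕ Fin n) B).submatrix
        finSumFinEquiv.symm finSumFinEquiv.symm := by
  have h : (Matrix.fromBlocks (u - u') 0 (v - v') 0 : Matrix (Fin n ⊕ Fin n) (Fin n ⊕ Fin n) B)
      = Matrix.fromBlocks u 0 v 0 - Matrix.fromBlocks u' 0 v' 0 := by
    ext i j
    rcases i with i | i <;> rcases j with j | j <;> simp
  rw [h]; rfl

lemma corner_add {B : Type*} [NonUnitalCStarAlgebra B] {n : ℕ}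
    (u u' : Matrix (Fin n) (Fin n) B) :
    (Matrix.fromBlocks u 0 0 0 : Matrix (Fin n ⊕ Fin n) (Fin n ⊕ Fin n) B).submatrix
        finSumFinEquiv.symm finSumFinEquiv.symm +
      (Matrix.fromBlocks u' 0 0 0 : Matrix (Fin n ⊕ Fin n) (Fin n ⊕ Fin n) B).submatrix
        finSumFinEquiv.symm finSumFinEquiv.symm
    = (Matrix.fromBlocks (u + u') 0 0 0
        : Matrix (Fin n ⊕ Fin n) (Fin n ⊕ Fin n) B).submatrix
        finSumFinEquiv.symm finSumFinEquiv.symm := by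
  have h : (Matrix.fromBlocks (u + u') 0 0 0 : Matrix (Fin n ⊕ Fin n) (Fin n ⊕ Fin n) B)
      = Matrix.fromBlocks u 0 0 0 + Matrix.fromBlocks u' 0 0 0 := by
    rw [Matrix.fromBlocks_add]; simp
  rw [h]; rfl

/-- Let `B` be a C*-algebra, `X ⊆ B` a closed linear subspace and `P : X → X`
a linear idempotent.  The C*-algebra `Mₙ(B)` (with its unique C*-norm) is modelled by an
arbitrary C*-algebra `Mat n` with a ⋆-algebra isomorphism `ι n` from the ⋆-algebra of matrices
`Matrix (Fin n) (Fin n) B`; matrices over `X` inherit this norm.  Then `P` is a complete left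
`M`-projection iff (i) `‖(Pₙx)*(Pₙx) + (x − Pₙx)*(x − Pₙx)‖ ≤ ‖x‖²` for every `n ≥ 1` and every
`n × n` matrix `x` over `X` (the map `ν_P^c` is completely contractive), and
(ii) `‖Pₙx + y − Pₙy‖² ≤ ‖x*x + y*y‖` for every `n ≥ 1` and all `n × n` matrices `x, y` over `X`
(the map `μ_P^c` is completely contractive). -/
theorem stmt_6 {B : Type*} [NonUnitalCStarAlgebra B]
    (Mat : ℕ → Type*) [∀ n, NonUnitalCStarAlgebra (Mat n)]
    (ι : ∀ n, Matrix (Fin n) (Fin n) B ≃⋆ₐ[ℂ] Mat n)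
    (X : Submodule ℂ B) (hX : IsClosed (X : Set B))
    (P : X →ₗ[ℂ] X) (hP : ∀ x, P (P x) = P x) :
    (∀ n : ℕ, 1 ≤ n → ∀ x : Matrix (Fin n) (Fin n) X,
        ‖ι n (star (x.map fun v => ((P v : B))) * (x.map fun v => ((P v : B))) +
            star (x.map Subtype.val - x.map fun v => ((P v : B))) *
              (x.map Subtype.val - x.map fun v => ((P v : B))))‖
          = ‖ι n (x.map Subtype.val)‖ ^ 2) ↔
    ((∀ n : ℕ, 1 ≤ n → ∀ x : Matrix (Fin n) (Fin n) X,
        ‖ι n (star (x.map fun v => ((P v : B))) * (x.map fun v => ((P v : B))) +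
            star (x.map Subtype.val - x.map fun v => ((P v : B))) *
              (x.map Subtype.val - x.map fun v => ((P v : B))))‖
          ≤ ‖ι n (x.map Subtype.val)‖ ^ 2) ∧
     (∀ n : ℕ, 1 ≤ n → ∀ x y : Matrix (Fin n) (Fin n) X,
        ‖ι n ((x.map fun v => ((P v : B))) + y.map Subtype.val - y.map fun v => ((P v : B)))‖ ^ 2
          ≤ ‖ι n (star (x.map Subtype.val) * (x.map Subtype.val) +
              star (y.map Subtype.val) * (y.map Subtype.val))‖)) := by
  constructor
  · intro h
    refine ⟨fun n hn x => (h n hn x).le, ?_⟩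
    intro n hn x y
    have e1 : ((x.map P + y - y.map P : Matrix (Fin n) (Fin n) X).map fun v => ((P v : B)))
        = x.map fun v => ((P v : B)) := by
      ext i j
      simp [Matrix.map_apply, Matrix.add_apply, Matrix.sub_apply, map_add, map_sub, hP]
    have e2 : ((x.map P + y - y.map P : Matrix (Fin n) (Fin n) X).map Subtype.val)
        = (x.map fun v => ((P v : B))) + (y.map Subtype.val) - (y.map fun v => ((P v : B))) := by
      ext i j
      simp [Matrix.map_apply, Matrix.add_apply, Matrix.sub_apply]
    have hw := h n hn (x.map P + y - y.map P)
    rw [e1, e2] at hw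
    have e3 : (x.map fun v => ((P v : B))) + (y.map Subtype.val) - (y.map fun v => ((P v : B))) - (x.map fun v => ((P v : B))) = (y.map Subtype.val) - (y.map fun v => ((P v : B))) := by abel
    rw [e3] at hw
    rw [← hw]
    have lhs_eq : ι n (star (x.map fun v => ((P v : B))) * (x.map fun v => ((P v : B))) + star ((y.map Subtype.val) - (y.map fun v => ((P v : B)))) * ((y.map Subtype.val) - (y.map fun v => ((P v : B)))))
        = star (ι n (x.map fun v => ((P v : B)))) * ι n (x.map fun v => ((P v : B))) +
          star (ι n ((y.map Subtype.val) - (y.map fun v => ((P v : B))))) * ι n ((y.map Subtype.val) - (y.map fun v => ((P v : B)))) := by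
      simp only [map_add, map_mul, map_star]
    have mid_eq : star (ι n (x.map fun v => ((P v : B)))) * ι n (x.map fun v => ((P v : B))) +
          star (ι n ((y.map Subtype.val) - (y.map fun v => ((P v : B))))) * ι n ((y.map Subtype.val) - (y.map fun v => ((P v : B)))) +
          (star (ι n (y.map fun v => ((P v : B)))) * ι n (y.map fun v => ((P v : B))) +
            star (ι n ((x.map Subtype.val) - (x.map fun v => ((P v : B))))) * ι n ((x.map Subtype.val) - (x.map fun v => ((P v : B)))))
        = ι n (star (x.map fun v => ((P v : B))) * (x.map fun v => ((P v : B))) + star ((y.map Subtype.val) - (y.map fun v => ((P v : B)))) * ((y.map Subtype.val) - (y.map fun v => ((P v : B)))) +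
            (star (y.map fun v => ((P v : B))) * (y.map fun v => ((P v : B))) + star ((x.map Subtype.val) - (x.map fun v => ((P v : B)))) * ((x.map Subtype.val) - (x.map fun v => ((P v : B)))))) := by
      simp only [map_add, map_mul, map_star]
    have hm : 1 ≤ n + n := le_trans hn (by omega)
    have h2 := h (n + n) hm
      ((Matrix.fromBlocks x 0 y 0 : Matrix (Fin n ⊕ Fin n) (Fin n ⊕ Fin n) X).submatrix
        finSumFinEquiv.symm finSumFinEquiv.symm)
    have m1 : (((Matrix.fromBlocks x 0 y 0 : Matrix (Fin n ⊕ Fin n) (Fin n ⊕ Fin n) X).submatrix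
          finSumFinEquiv.symm finSumFinEquiv.symm).map fun v => ((P v : B)))
        = (Matrix.fromBlocks (x.map fun v => ((P v : B))) 0 (y.map fun v => ((P v : B))) 0
            : Matrix (Fin n ⊕ Fin n) (Fin n ⊕ Fin n) B).submatrix
          finSumFinEquiv.symm finSumFinEquiv.symm := by
      rw [← Matrix.submatrix_map, Matrix.fromBlocks_map,
        Matrix.map_zero _ (by simp : ((fun v => ((P v : B))) (0 : X)) = 0)]
    have m2 : (((Matrix.fromBlocks x 0 y 0 : Matrix (Fin n ⊕ Fin n) (Fin n ⊕ Fin n) X).submatrix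
          finSumFinEquiv.symm finSumFinEquiv.symm).map Subtype.val)
        = (Matrix.fromBlocks (x.map Subtype.val) 0 (y.map Subtype.val) 0
            : Matrix (Fin n ⊕ Fin n) (Fin n ⊕ Fin n) B).submatrix
          finSumFinEquiv.symm finSumFinEquiv.symm := by
      rw [← Matrix.submatrix_map, Matrix.fromBlocks_map,
        Matrix.map_zero _ (rfl : (Subtype.val (0 : X)) = 0)]
    rw [m1, m2, corner_sub, corner_star_mul, corner_star_mul, corner_add] at h2
    rw [corner_isometry (ι n) (ι (n + n))] at h2
    have rhs_eq : ‖ι (n + n) ((Matrix.fromBlocks (x.map Subtype.val) 0 (y.map Subtype.val) 0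
          : Matrix (Fin n ⊕ Fin n) (Fin n ⊕ Fin n) B).submatrix
          finSumFinEquiv.symm finSumFinEquiv.symm)‖ ^ 2
        = ‖ι n (star (x.map Subtype.val) * (x.map Subtype.val) + star (y.map Subtype.val) * (y.map Subtype.val))‖ := by
      rw [sq, ← CStarRing.norm_star_mul_self, ← map_star, ← map_mul, corner_star_mul]
      exact corner_isometry (ι n) (ι (n + n)) _
    rw [rhs_eq] at h2
    have cc : star (x.map fun v => ((P v : B))) * (x.map fun v => ((P v : B))) + star ((y.map Subtype.val) - (y.map fun v => ((P v : B)))) * ((y.map Subtype.val) - (y.map fun v => ((P v : B)))) +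
          (star (y.map fun v => ((P v : B))) * (y.map fun v => ((P v : B))) + star ((x.map Subtype.val) - (x.map fun v => ((P v : B)))) * ((x.map Subtype.val) - (x.map fun v => ((P v : B)))))
        = star (x.map fun v => ((P v : B))) * (x.map fun v => ((P v : B))) + star (y.map fun v => ((P v : B))) * (y.map fun v => ((P v : B))) +
          (star ((x.map Subtype.val) - (x.map fun v => ((P v : B)))) * ((x.map Subtype.val) - (x.map fun v => ((P v : B)))) +
            star ((y.map Subtype.val) - (y.map fun v => ((P v : B)))) * ((y.map Subtype.val) - (y.map fun v => ((P v : B))))) := by abel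
    rw [lhs_eq]
    refine (aux_norm (ι n (x.map fun v => ((P v : B)))) (ι n ((y.map Subtype.val) - (y.map fun v => ((P v : B))))) (ι n (y.map fun v => ((P v : B))))
      (ι n ((x.map Subtype.val) - (x.map fun v => ((P v : B)))))).trans ?_
    rw [mid_eq, cc, h2]
  · rintro ⟨h1, h2⟩ n hn x
    refine le_antisymm (h1 n hn x) ?_
    have hx := h2 n hn (x.map P) (x - x.map P)
    have a1 : ((x.map P).map fun v => ((P v : B))) = x.map fun v => ((P v : B)) := by
      ext i j
      simp [Matrix.map_apply, hP]
    have a2 : ((x.map P).map Subtype.val) = x.map fun v => ((P v : B)) := by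
      ext i j
      simp [Matrix.map_apply]
    have a3 : ((x - x.map P).map Subtype.val) = (x.map Subtype.val) - (x.map fun v => ((P v : B))) := by
      ext i j
      simp [Matrix.map_apply, Matrix.sub_apply]
    have a4 : ((x - x.map P).map fun v => ((P v : B))) = 0 := by
      ext i j
      simp [Matrix.map_apply, Matrix.sub_apply, map_sub, hP]
    rw [a1, a2, a3, a4] at hx
    have a5 : (x.map fun v => ((P v : B))) + ((x.map Subtype.val) - (x.map fun v => ((P v : B)))) - (0 : Matrix (Fin n) (Fin n) B) = (x.map Subtype.val) := by abel
    rw [a5] at hx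
    exact hx
end

section
/- Let B be a C*-algebra, X a closed linear subspace of B, P : X → X a complete left M-projection, and Q : X → X a linear idempotent with ‖Q(x)‖ ≤ ‖x‖ for all x ∈ X. If range Q = range P, then Q = P. -/
noncomputable def stmt8Hom {B M1 : Type*} [NonUnitalCStarAlgebra B] [NonUnitalCStarAlgebra M1]
    (ι1 : Matrix (Fin 1) (Fin 1) B ≃⋆ₐ[ℂ] M1) : B →⋆ₙₐ[ℂ] M1 where
  toFun b := ι1 (Matrix.of fun _ _ => b)
  map_smul' c b := by
    show ι1 (Matrix.of fun _ _ => c • b) = c • ι1 (Matrix.of fun _ _ => b)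
    have h : (Matrix.of fun _ _ => c • b) = c • (Matrix.of fun _ _ => b : Matrix (Fin 1) (Fin 1) B) := by
      ext i j; simp
    rw [h, map_smul]
  map_zero' := by
    show ι1 (Matrix.of fun _ _ => (0:B)) = 0
    have h : (Matrix.of fun _ _ => (0:B)) = (0 : Matrix (Fin 1) (Fin 1) B) := by ext i j; simp
    rw [h, map_zero]
  map_add' a b := by
    show ι1 (Matrix.of fun _ _ => a + b) = ι1 (Matrix.of fun _ _ => a) + ι1 (Matrix.of fun _ _ => b)
    have h : (Matrix.of fun _ _ => a + b) =
        (Matrix.of fun _ _ => a : Matrix (Fin 1) (Fin 1) B) + Matrix.of fun _ _ => b := by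
      ext i j; simp
    rw [h, map_add]
  map_mul' a b := by
    show ι1 (Matrix.of fun _ _ => a * b) = ι1 (Matrix.of fun _ _ => a) * ι1 (Matrix.of fun _ _ => b)
    have h : (Matrix.of fun _ _ => a * b) =
        (Matrix.of fun _ _ => a : Matrix (Fin 1) (Fin 1) B) * Matrix.of fun _ _ => b := by
      ext i j; simp [Matrix.mul_apply, Fin.sum_univ_one]
    rw [h, map_mul]
  map_star' b := by
    show ι1 (Matrix.of fun _ _ => star b) = star (ι1 (Matrix.of fun _ _ => b))
    have h : (Matrix.of fun _ _ => star b) =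
        star (Matrix.of fun _ _ => b : Matrix (Fin 1) (Fin 1) B) := by
      ext i j; simp [Matrix.star_apply]
    rw [h, map_star]

theorem stmt8_norm {B M1 : Type*} [NonUnitalCStarAlgebra B] [NonUnitalCStarAlgebra M1]
    (ι1 : Matrix (Fin 1) (Fin 1) B ≃⋆ₐ[ℂ] M1) :
    ∀ b : B, ‖ι1 (Matrix.of fun _ _ => b)‖ = ‖b‖ := by
  have hinj : Function.Injective (stmt8Hom ι1) := by
    intro a b h
    have := ι1.injective h
    exact congrFun (congrFun this 0) 0
  exact fun b => NonUnitalStarAlgHom.norm_map (stmt8Hom ι1) hinj b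



/-- Let `B` be a C*-algebra, `X ⊆ B` a closed linear subspace, `P : X → X` a
complete left `M`-projection (idempotent with `‖(Pₙx)*(Pₙx) + (x − Pₙx)*(x − Pₙx)‖ = ‖x‖²` for
every `n ≥ 1` and every `n × n` matrix `x` over `X`, where `Mₙ(B)` — with its unique C*-norm —
is modelled by a C*-algebra `Mat n` with a ⋆-algebra isomorphism `ι n` from the ⋆-algebra of
matrices over `B`), and `Q : X → X` a contractive linear idempotent with `range Q = range P`.
Then `Q = P`. -/
theorem stmt_8 {B : Type*} [NonUnitalCStarAlgebra B]
    (Mat : ℕ → Type*) [∀ n, NonUnitalCStarAlgebra (Mat n)]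
    (ι : ∀ n, Matrix (Fin n) (Fin n) B ≃⋆ₐ[ℂ] Mat n)
    (X : Submodule ℂ B) (hX : IsClosed (X : Set B))
    (P : X →ₗ[ℂ] X) (hP2 : ∀ x, P (P x) = P x)
    (hPM : ∀ n : ℕ, 1 ≤ n → ∀ x : Matrix (Fin n) (Fin n) X,
        ‖ι n (star (x.map fun v => ((P v : B))) * (x.map fun v => ((P v : B))) +
            star (x.map Subtype.val - x.map fun v => ((P v : B))) *
              (x.map Subtype.val - x.map fun v => ((P v : B))))‖
          = ‖ι n (x.map Subtype.val)‖ ^ 2)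
    (Q : X →ₗ[ℂ] X) (hQ2 : ∀ x, Q (Q x) = Q x)
    (hQc : ∀ x : X, ‖(Q x : B)‖ ≤ ‖(x : B)‖)
    (hrange : Set.range Q = Set.range P) :
    Q = P := by
  have hfn : ∀ b : B, ‖ι 1 (Matrix.of fun _ _ => b)‖ = ‖b‖ := stmt8_norm (ι 1)
  -- n = 1 case of the complete M-projection identity, stated in B
  have h1 : ∀ z : X, ‖star ((P z : B)) * (P z : B)
      + star ((z : B) - (P z : B)) * ((z : B) - (P z : B))‖ = ‖(z : B)‖ ^ 2 := by
    intro z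
    have key := hPM 1 le_rfl (Matrix.of fun _ _ => z : Matrix (Fin 1) (Fin 1) X)
    have e1 : (((Matrix.of fun _ _ => z : Matrix (Fin 1) (Fin 1) X)).map fun v => ((P v : B)))
        = Matrix.of fun _ _ => ((P z : B)) := by ext i j; simp
    have e2 : (((Matrix.of fun _ _ => z : Matrix (Fin 1) (Fin 1) X)).map (Subtype.val))
        = Matrix.of fun _ _ => (z : B) := by ext i j; simp
    rw [e1, e2] at key
    have e3 : star (Matrix.of fun _ _ => ((P z : B)) : Matrix (Fin 1) (Fin 1) B) *
          (Matrix.of fun _ _ => ((P z : B)))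
        + star ((Matrix.of fun _ _ => (z : B) : Matrix (Fin 1) (Fin 1) B) -
            Matrix.of fun _ _ => ((P z : B))) *
          ((Matrix.of fun _ _ => (z : B)) - Matrix.of fun _ _ => ((P z : B)))
        = Matrix.of fun _ _ => (star ((P z : B)) * (P z : B)
            + star ((z : B) - (P z : B)) * ((z : B) - (P z : B))) := by
      ext i j
      simp [Matrix.mul_apply, Matrix.star_apply, Fin.sum_univ_one]
    rw [e3] at key
    rw [hfn, hfn] at key
    exact key
  -- fixing the ranges
  have hPfix : ∀ u : X, P (Q u) = Q u := by
    intro u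
    have hm : Q u ∈ Set.range P := hrange ▸ Set.mem_range_self u
    obtain ⟨w, hw⟩ := hm
    rw [← hw, hP2]
  have hQfix : ∀ u : X, Q (P u) = P u := by
    intro u
    have hm : P u ∈ Set.range Q := hrange.symm ▸ Set.mem_range_self u
    obtain ⟨w, hw⟩ := hm
    rw [← hw, hQ2]
  ext x
  set a : X := Q x - P x with ha
  set y : X := x - P x with hy
  have hPa : P a = a := by simp only [ha, map_sub, hPfix, hP2]
  have hPy : P y = 0 := by simp only [hy, map_sub, hP2, sub_self]
  have hQa : Q a = a := by simp only [ha, map_sub, hQ2, hQfix]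
  have hQy : Q y = a := by simp only [hy, ha, map_sub, hQfix]
  -- main inequality
  have hna : ∀ t : ℝ, 0 ≤ t →
      (t + 1) ^ 2 * ‖(a : B)‖ ^ 2 ≤ t ^ 2 * ‖(a : B)‖ ^ 2 + ‖(y : B)‖ ^ 2 := by
    intro t ht
    set z : X := (t : ℂ) • a + y with hz
    have hPz : P z = (t : ℂ) • a := by
      simp only [hz, map_add, map_smul, hPa, hPy, add_zero]
    have hQz : Q z = ((t : ℝ) + 1 : ℂ) • a := by
      simp only [hz, map_add, map_smul, hQa, hQy]
      push_cast
      rw [add_smul, one_smul]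
    have hnta : ‖((t : ℂ) • (a : B))‖ = t * ‖(a : B)‖ := by
      rw [norm_smul, Complex.norm_real, Real.norm_eq_abs, abs_of_nonneg ht]
    -- contractivity:  (t+1) ‖a‖ ≤ ‖z‖
    have hcontr : (t + 1) * ‖(a : B)‖ ≤ ‖(z : B)‖ := by
      have := hQc z
      rw [hQz] at this
      have hcoe : ((((t : ℝ) + 1 : ℂ) • a : X) : B) = ((t : ℝ) + 1 : ℂ) • (a : B) := rfl
      rw [hcoe, norm_smul] at this
      have : ‖((t : ℝ) + 1 : ℂ)‖ * ‖(a : B)‖ ≤ ‖(z : B)‖ := this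
      rwa [show ((t : ℝ) + 1 : ℂ) = (((t + 1 : ℝ)) : ℂ) by push_cast; ring,
        Complex.norm_real, Real.norm_eq_abs, abs_of_nonneg (by linarith)] at this
    -- Pythagoras:
    have hpyth : ‖(z : B)‖ ^ 2 ≤ t ^ 2 * ‖(a : B)‖ ^ 2 + ‖(y : B)‖ ^ 2 := by
      have hzz := h1 z
      have hPzB : ((P z : X) : B) = (t : ℂ) • (a : B) := by rw [hPz]; rfl
      have hzB : ((z : X) : B) = (t : ℂ) • (a : B) + (y : B) := rfl
      rw [hPzB, hzB, add_sub_cancel_left, ← hzB] at hzz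
      rw [← hzz]
      calc ‖star ((t : ℂ) • (a : B)) * ((t : ℂ) • (a : B)) + star (y : B) * (y : B)‖
          ≤ ‖star ((t : ℂ) • (a : B)) * ((t : ℂ) • (a : B))‖ + ‖star (y : B) * (y : B)‖ :=
            norm_add_le _ _
        _ = ‖((t : ℂ) • (a : B))‖ ^ 2 + ‖(y : B)‖ ^ 2 := by
            rw [CStarRing.norm_star_mul_self, CStarRing.norm_star_mul_self]; ring
        _ = t ^ 2 * ‖(a : B)‖ ^ 2 + ‖(y : B)‖ ^ 2 := by rw [hnta]; ring
    calc (t + 1) ^ 2 * ‖(a : B)‖ ^ 2 = ((t + 1) * ‖(a : B)‖) ^ 2 := by ring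
      _ ≤ ‖(z : B)‖ ^ 2 := by
          have h0 : 0 ≤ (t + 1) * ‖(a : B)‖ := by positivity
          exact pow_le_pow_left₀ h0 hcontr 2
      _ ≤ t ^ 2 * ‖(a : B)‖ ^ 2 + ‖(y : B)‖ ^ 2 := hpyth
  have hazero : (a : B) = 0 := by
    by_contra h
    have hapos : 0 < ‖(a : B)‖ := norm_pos_iff.mpr h
    have hc : 0 < ‖(a : B)‖ ^ 2 := by positivity
    set t : ℝ := ‖(y : B)‖ ^ 2 / ‖(a : B)‖ ^ 2 with htdef
    have ht0 : 0 ≤ t := by positivity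
    have htc : t * ‖(a : B)‖ ^ 2 = ‖(y : B)‖ ^ 2 := div_mul_cancel₀ _ (ne_of_gt hc)
    have := hna t ht0
    nlinarith [this, hc, htc]
  have : a = 0 := Subtype.ext hazero
  have : Q x - P x = 0 := this
  simpa [sub_eq_zero] using this
end

section
/- Let B be a C*-algebra, X a closed linear subspace of B, and P : X → X a linear idempotent which is a left M-projection relative to the embedding, i.e., ‖(Px)*(Px) + (x − Px)*(x − Px)‖ = ‖x‖² for all x ∈ X. Then for every x ∈ X and every h in the range of P, ‖x − h‖ ≥ ‖x − P(x)‖. Consequently P(x) is a nearest point to x in the range of P, and the range of P is proximinal in X. -/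
open Unitization in
lemma key_norm_le {B : Type*} [NonUnitalCStarAlgebra B] (c d : B) :
    ‖star d * d‖ ≤ ‖star c * c + star d * d‖ := by
  letI : PartialOrder (Unitization ℂ B) := CStarAlgebra.spectralOrder _
  haveI : StarOrderedRing (Unitization ℂ B) := CStarAlgebra.spectralOrderedRing _
  rw [← Unitization.norm_inr (𝕜 := ℂ) (star d * d),
    ← Unitization.norm_inr (𝕜 := ℂ) (star c * c + star d * d)]
  apply CStarAlgebra.norm_le_norm_of_nonneg_of_le
  · have : ((star d * d : B) : Unitization ℂ B) = star (d : Unitization ℂ B) * (d : Unitization ℂ B) := by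
      simp
    rw [this]
    exact star_mul_self_nonneg _
  · have : ((star c * c + star d * d : B) : Unitization ℂ B)
        = star (c : Unitization ℂ B) * c + ((star d * d : B) : Unitization ℂ B) := by
      simp [Unitization.inr_add]
    rw [this]
    exact le_add_of_nonneg_left (star_mul_self_nonneg _)

/-- Let `B` be a C*-algebra, `X ⊆ B` a closed linear subspace and `P : X → X`
a linear idempotent which is a left `M`-projection relative to the embedding, i.e.
`‖(Px)*(Px) + (x − Px)*(x − Px)‖ = ‖x‖²` for all `x ∈ X`.  Then for every `x ∈ X` and every `h`
in the range of `P`, `‖x − h‖ ≥ ‖x − P(x)‖`; consequently `P(x)` is a nearest point to `x` in the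
range of `P`, and the range of `P` is proximinal in `X`. -/
theorem stmt_9 {B : Type*} [NonUnitalCStarAlgebra B]
    (X : Submodule ℂ B) (hX : IsClosed (X : Set B))
    (P : X →ₗ[ℂ] X) (hP2 : ∀ x, P (P x) = P x)
    (hPM : ∀ x : X,
      ‖star ((P x : B)) * (P x : B) + star ((x : B) - (P x : B)) * ((x : B) - (P x : B))‖
        = ‖(x : B)‖ ^ 2) :
    (∀ x : X, ∀ h ∈ Set.range P, ‖(x : B) - (P x : B)‖ ≤ ‖(x : B) - (h : B)‖) ∧
    (∀ x : X, ∃ h ∈ Set.range P, ∀ h' ∈ Set.range P,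
      ‖(x : B) - (h : B)‖ ≤ ‖(x : B) - (h' : B)‖) := by
  have main : ∀ x : X, ∀ h ∈ Set.range P, ‖(x : B) - (P x : B)‖ ≤ ‖(x : B) - (h : B)‖ := by
    intro x h hh
    obtain ⟨y, rfl⟩ := hh
    have hPh : P (P y) = P y := hP2 y
    have key := hPM (x - P y)
    have hPsub : P (x - P y) = P x - P y := by rw [map_sub, hPh]
    rw [hPsub] at key
    have hcoe : ((x - P y : X) : B) - ((P x - P y : X) : B) = (x : B) - (P x : B) := by
      push_cast; abel
    rw [hcoe] at key
    have hsq : ‖(x : B) - (P x : B)‖ ^ 2 ≤ ‖((x - P y : X) : B)‖ ^ 2 := by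
      calc ‖(x : B) - (P x : B)‖ ^ 2
          = ‖star ((x : B) - (P x : B)) * ((x : B) - (P x : B))‖ := by
            rw [CStarRing.norm_star_mul_self, sq]
        _ ≤ ‖star ((P x - P y : X) : B) * ((P x - P y : X) : B)
              + star ((x : B) - (P x : B)) * ((x : B) - (P x : B))‖ :=
            key_norm_le _ _
        _ = ‖((x - P y : X) : B)‖ ^ 2 := key
    have h1 : ‖(x : B) - (P x : B)‖ ≤ ‖((x - P y : X) : B)‖ := by
      have := Real.sqrt_le_sqrt hsq
      rwa [Real.sqrt_sq (norm_nonneg _), Real.sqrt_sq (norm_nonneg _)] at this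
    have h2 : ((x - P y : X) : B) = (x : B) - ((P y : X) : B) := by push_cast; ring_nf
    rwa [h2] at h1
  refine ⟨main, fun x => ⟨P x, ⟨x, rfl⟩, fun h' hh' => main x h' hh'⟩⟩
end

section
/- Let H be a complex Hilbert space and P : H → H a linear idempotent such that for every ξ ∈ H, the operator norm of the linear map T_ξ : ℂ² → H, T_ξ(s,t) = s·P(ξ) + t·(ξ − P(ξ)) (where ℂ² carries the Euclidean norm), equals ‖ξ‖. Then P = 0 or P = I. (This says the column Hilbert space H_c has no nontrivial right M-projections.) -/
/-- The linear map `ℂ² → H`, `(s, t) ↦ s·ξ + t·η`, bundled as a continuous linear map,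
where `ℂ²` carries the Euclidean norm.  Its operator norm is the norm of the "row"
`[ξ η]` in the row space `R₂(H_c)` over the column Hilbert space `H_c`. -/
noncomputable def rowPairMap {H : Type*} [NormedAddCommGroup H] [NormedSpace ℂ H]
    (ξ η : H) : EuclideanSpace ℂ (Fin 2) →L[ℂ] H :=
  LinearMap.toContinuousLinearMap
    { toFun := fun v => v 0 • ξ + v 1 • η
      map_add' := fun u v => by
        show (u 0 + v 0) • ξ + (u 1 + v 1) • η = _
        simp only [add_smul]; abel
      map_smul' := fun c v => by
        show (c * v 0) • ξ + (c * v 1) • η = _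
        simp [mul_smul, smul_add] }


lemma rowPairMap_apply {H : Type*} [NormedAddCommGroup H] [NormedSpace ℂ H]
    (ξ η : H) (v : EuclideanSpace ℂ (Fin 2)) :
    rowPairMap ξ η v = v 0 • ξ + v 1 • η := rfl

lemma rowPairMap_smul_le {H : Type*} [NormedAddCommGroup H] [NormedSpace ℂ H]
    (a b : H) (c : ℂ) (hc : ‖c‖ = 1) :
    ‖rowPairMap a (c • b)‖ ≤ ‖rowPairMap a b‖ := by
  apply ContinuousLinearMap.opNorm_le_bound _ (norm_nonneg _)
  intro v
  set w : EuclideanSpace ℂ (Fin 2) := WithLp.toLp 2 ![v 0, c * v 1] with hw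
  have hw0 : w 0 = v 0 := rfl
  have hw1 : w 1 = c * v 1 := rfl
  have hwv : ‖w‖ = ‖v‖ := by
    rw [EuclideanSpace.norm_eq, EuclideanSpace.norm_eq]
    congr 1
    rw [Fin.sum_univ_two, Fin.sum_univ_two, hw0, hw1, norm_mul, hc, one_mul]
  have heq : rowPairMap a (c • b) v = rowPairMap a b w := by
    rw [rowPairMap_apply, rowPairMap_apply, hw0, hw1, mul_smul, smul_comm]
  rw [heq, ← hwv]
  exact ContinuousLinearMap.le_opNorm _ _

lemma rowPairMap_smul_eq {H : Type*} [NormedAddCommGroup H] [NormedSpace ℂ H]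
    (a b : H) (c : ℂ) (hc : ‖c‖ = 1) :
    ‖rowPairMap a (c • b)‖ = ‖rowPairMap a b‖ := by
  have hc0 : c ≠ 0 := by intro h0; rw [h0, norm_zero] at hc; norm_num at hc
  refine le_antisymm (rowPairMap_smul_le a b c hc) ?_
  have := rowPairMap_smul_le a (c • b) c⁻¹ (by rw [norm_inv, hc]; norm_num)
  rwa [inv_smul_smul₀ hc0] at this

lemma rowPairMap_le_max {H : Type*} [NormedAddCommGroup H] [InnerProductSpace ℂ H]
    (x y : H) (hxy : (inner ℂ x y : ℂ) = 0) :
    ‖rowPairMap x y‖ ≤ max ‖x‖ ‖y‖ := by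
  apply ContinuousLinearMap.opNorm_le_bound _ (le_max_of_le_left (norm_nonneg _))
  intro v
  have h1 : (inner ℂ (v 0 • x) (v 1 • y) : ℂ) = 0 := by
    rw [inner_smul_left, inner_smul_right, hxy]; ring
  have hsq : ‖rowPairMap x y v‖ ^ 2 = ‖v 0‖ ^ 2 * ‖x‖ ^ 2 + ‖v 1‖ ^ 2 * ‖y‖ ^ 2 := by
    rw [rowPairMap_apply, @norm_add_sq ℂ _ _ _ _, h1]
    simp [norm_smul, mul_pow]
  have hv : ‖v‖ ^ 2 = ‖v 0‖ ^ 2 + ‖v 1‖ ^ 2 := by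
    rw [EuclideanSpace.norm_eq, Real.sq_sqrt (by positivity), Fin.sum_univ_two]
  have hmax : 0 ≤ max ‖x‖ ‖y‖ := le_max_of_le_left (norm_nonneg _)
  have key : ‖rowPairMap x y v‖ ^ 2 ≤ (max ‖x‖ ‖y‖ * ‖v‖) ^ 2 := by
    rw [hsq, mul_pow, hv]
    have h2 : ‖x‖ ^ 2 ≤ (max ‖x‖ ‖y‖) ^ 2 := by
      apply pow_le_pow_left₀ (norm_nonneg _) (le_max_left _ _)
    have h3 : ‖y‖ ^ 2 ≤ (max ‖x‖ ‖y‖) ^ 2 := by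
      apply pow_le_pow_left₀ (norm_nonneg _) (le_max_right _ _)
    nlinarith [sq_nonneg (‖v 0‖), sq_nonneg (‖v 1‖)]
  nlinarith [norm_nonneg (rowPairMap x y v), mul_nonneg hmax (norm_nonneg v), key]


/-- Let `H` be a complex Hilbert space and `P : H → H` a linear idempotent
such that for every `ξ` the operator norm of `(s,t) ↦ s·P(ξ) + t·(ξ − P(ξ))` on Euclidean `ℂ²`
equals `‖ξ‖`.  Then `P = 0` or `P = I`: the column Hilbert space `H_c` has no nontrivial right
`M`-projections. -/
theorem stmt_12 {H : Type*} [NormedAddCommGroup H] [InnerProductSpace ℂ H]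
    (P : H →ₗ[ℂ] H) (hP : ∀ ξ, P (P ξ) = P ξ)
    (h : ∀ ξ : H, ‖rowPairMap (P ξ) (ξ - P ξ)‖ = ‖ξ‖) :
    P = 0 ∨ P = LinearMap.id := by
  by_contra hcon
  push_neg at hcon
  obtain ⟨hP0, hPid⟩ := hcon
  have hex : ∃ ξ, P ξ ≠ 0 := by
    by_contra hh; push_neg at hh
    exact hP0 (LinearMap.ext fun ξ => hh ξ)
  have hey : ∃ η, P η ≠ η := by
    by_contra hh; push_neg at hh
    exact hPid (LinearMap.ext fun η => hh η)
  obtain ⟨ξ, hξ⟩ := hex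
  obtain ⟨η, hη⟩ := hey
  set x := P ξ with hxdef
  set y := η - P η with hydef
  have hx : P x = x := hP ξ
  have hy : P y = 0 := by
    rw [hydef, map_sub, hP, sub_self]
  have hyne : y ≠ 0 := sub_ne_zero.mpr (Ne.symm hη)
  have key : ∀ c : ℂ, ‖c‖ = 1 → ‖x + c • y‖ = ‖rowPairMap x y‖ := by
    intro c hc
    have hPz : P (x + c • y) = x := by
      rw [map_add, map_smul, hx, hy, smul_zero, add_zero]
    have hz : (x + c • y) - P (x + c • y) = c • y := by
      rw [hPz]; abel
    have := h (x + c • y)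
    rw [hPz, add_sub_cancel_left, rowPairMap_smul_eq x y c hc] at this
    exact this.symm
  have h1 := key 1 (by norm_num)
  have h2 := key (-1) (by norm_num)
  have h3 := key Complex.I (by simp)
  rw [one_smul] at h1
  rw [neg_one_smul, ← sub_eq_add_neg] at h2
  set r : ℂ := inner ℂ x y with hrdef
  have e1 : ‖x + y‖ ^ 2 = ‖x‖ ^ 2 + 2 * r.re + ‖y‖ ^ 2 := by
    have := @norm_add_sq ℂ _ _ _ _ x y
    simpa using this
  have e2 : ‖x - y‖ ^ 2 = ‖x‖ ^ 2 - 2 * r.re + ‖y‖ ^ 2 := by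
    have := @norm_sub_sq ℂ _ _ _ _ x y
    simpa using this
  have e3 : ‖x + Complex.I • y‖ ^ 2 = ‖x‖ ^ 2 - 2 * r.im + ‖y‖ ^ 2 := by
    have := @norm_add_sq ℂ _ _ _ _ x (Complex.I • y)
    have hi : (inner ℂ x (Complex.I • y) : ℂ) = Complex.I * r := by
      rw [inner_smul_right]
    have hni : ‖Complex.I • y‖ = ‖y‖ := by
      rw [norm_smul, Complex.norm_I, one_mul]
    rw [hi, hni] at this
    simpa [← sub_eq_add_neg] using this
  have h12 : ‖x + y‖ = ‖x - y‖ := by rw [h1, h2]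
  have h13 : ‖x + y‖ = ‖x + Complex.I • y‖ := by rw [h1, h3]
  have hre : r.re = 0 := by
    have : ‖x + y‖ ^ 2 = ‖x - y‖ ^ 2 := by rw [h12]
    rw [e1, e2] at this; linarith
  have him : r.im = 0 := by
    have : ‖x + y‖ ^ 2 = ‖x + Complex.I • y‖ ^ 2 := by rw [h13]
    rw [e1, e3] at this; linarith
  have hr : r = 0 := Complex.ext hre him
  have hle : ‖x + y‖ ≤ max ‖x‖ ‖y‖ := by
    rw [h1]; exact rowPairMap_le_max x y hr
  have epyth : ‖x + y‖ ^ 2 = ‖x‖ ^ 2 + ‖y‖ ^ 2 := by rw [e1, hre]; ring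
  have hxpos : 0 < ‖x‖ := norm_pos_iff.mpr hξ
  have hypos : 0 < ‖y‖ := norm_pos_iff.mpr hyne
  rcases le_total ‖x‖ ‖y‖ with hm | hm
  · rw [max_eq_right hm] at hle
    nlinarith [pow_le_pow_left₀ (norm_nonneg (x + y)) hle 2]
  · rw [max_eq_left hm] at hle
    nlinarith [pow_le_pow_left₀ (norm_nonneg (x + y)) hle 2]
end

section
/- Let H be a complex Hilbert space and let d be a bounded linear operator on H with ‖d‖ ≤ 1. Then d is self-adjoint if and only if ‖1 + i·t·d‖ ≤ √(1 + t²) for every t ∈ ℝ, where 1 denotes the identity operator and i the imaginary unit. -/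
local notation "⟪" x ", " y "⟫" => @inner ℂ _ _ x y

lemma key_norm_sq {H : Type*} [NormedAddCommGroup H] [InnerProductSpace ℂ H]
    (d : H →L[ℂ] H) (t : ℝ) (x : H) :
    ‖x + (Complex.I * (t : ℂ)) • d x‖ ^ 2
      = ‖x‖ ^ 2 - 2 * t * (⟪x, d x⟫).im + t ^ 2 * ‖d x‖ ^ 2 := by
  rw [@norm_add_sq ℂ]
  rw [inner_smul_right, norm_smul]
  simp [Complex.mul_re, mul_pow]
  ring

/-- For a bounded operator `d` on a complex Hilbert space `H` with `‖d‖ ≤ 1`,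
`d` is self-adjoint iff `‖1 + i·t·d‖ ≤ √(1 + t²)` for every real `t`. -/
theorem stmt_14 {H : Type*} [NormedAddCommGroup H] [InnerProductSpace ℂ H] [CompleteSpace H]
    (d : H →L[ℂ] H) (hd : ‖d‖ ≤ 1) :
    IsSelfAdjoint d ↔
      ∀ t : ℝ, ‖(1 : H →L[ℂ] H) + (Complex.I * (t : ℂ)) • d‖ ≤ Real.sqrt (1 + t ^ 2) := by
  have hdx : ∀ x : H, ‖d x‖ ≤ ‖x‖ := by
    intro x
    calc ‖d x‖ ≤ ‖d‖ * ‖x‖ := d.le_opNorm x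
    _ ≤ 1 * ‖x‖ := by gcongr
    _ = ‖x‖ := one_mul _
  constructor
  · intro hsa t
    have hsym := (ContinuousLinearMap.isSelfAdjoint_iff_isSymmetric).mp hsa
    have him : ∀ x : H, (⟪x, d x⟫).im = 0 := by
      intro x
      have h1 : (starRingEnd ℂ) ⟪(d : H →ₗ[ℂ] H) x, x⟫ = ⟪(d : H →ₗ[ℂ] H) x, x⟫ :=
        ((LinearMap.isSymmetric_iff_inner_map_self_real _).mp hsym) x
      have h2 : ⟪x, d x⟫ = (starRingEnd ℂ) ⟪d x, x⟫ := (inner_conj_symm _ _).symm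
      rw [Complex.conj_eq_iff_im] at h1
      simp only [ContinuousLinearMap.coe_coe] at h1
      rw [h2, Complex.conj_im, h1, neg_zero]
    apply ContinuousLinearMap.opNorm_le_bound _ (Real.sqrt_nonneg _)
    intro x
    rw [show ((1 : H →L[ℂ] H) + (Complex.I * (t : ℂ)) • d) x
        = x + (Complex.I * (t : ℂ)) • d x by simp]
    have key : ‖x + (Complex.I * (t : ℂ)) • d x‖ ^ 2 ≤ (1 + t ^ 2) * ‖x‖ ^ 2 := by
      rw [key_norm_sq, him]
      have hdd : ‖d x‖ ^ 2 ≤ ‖x‖ ^ 2 := by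
        have := hdx x; nlinarith [norm_nonneg (d x), norm_nonneg x]
      nlinarith [sq_nonneg t]
    calc ‖x + (Complex.I * (t : ℂ)) • d x‖
        = Real.sqrt (‖x + (Complex.I * (t : ℂ)) • d x‖ ^ 2) :=
          (Real.sqrt_sq (norm_nonneg _)).symm
      _ ≤ Real.sqrt ((1 + t ^ 2) * ‖x‖ ^ 2) := Real.sqrt_le_sqrt key
      _ = Real.sqrt (1 + t ^ 2) * ‖x‖ := by
          rw [Real.sqrt_mul (by positivity), Real.sqrt_sq (norm_nonneg _)]
  · intro h
    have him : ∀ x : H, (⟪x, d x⟫).im = 0 := by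
      intro x
      set c := (⟪x, d x⟫).im with hc
      set a := ‖x‖ ^ 2 - ‖d x‖ ^ 2 with ha
      have ha0 : 0 ≤ a := by
        have := hdx x
        nlinarith [norm_nonneg (d x), norm_nonneg x]
      have hkey : ∀ t : ℝ, -(2 * t * c) ≤ t ^ 2 * a := by
        intro t
        have h1 : ‖((1 : H →L[ℂ] H) + (Complex.I * (t : ℂ)) • d) x‖
            ≤ Real.sqrt (1 + t ^ 2) * ‖x‖ :=
          ContinuousLinearMap.le_of_opNorm_le _ (h t) x
        have h2 : ‖x + (Complex.I * (t : ℂ)) • d x‖ ^ 2 ≤ (1 + t ^ 2) * ‖x‖ ^ 2 := by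
          have h3 : (Real.sqrt (1 + t ^ 2) * ‖x‖) ^ 2 = (1 + t ^ 2) * ‖x‖ ^ 2 := by
            rw [mul_pow, Real.sq_sqrt (by positivity)]
          rw [show ((1 : H →L[ℂ] H) + (Complex.I * (t : ℂ)) • d) x
              = x + (Complex.I * (t : ℂ)) • d x by simp] at h1
          calc ‖x + (Complex.I * (t : ℂ)) • d x‖ ^ 2
              ≤ (Real.sqrt (1 + t ^ 2) * ‖x‖) ^ 2 := by
                apply pow_le_pow_left₀ (norm_nonneg _) h1
          _ = (1 + t ^ 2) * ‖x‖ ^ 2 := h3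
        rw [key_norm_sq] at h2
        nlinarith
      by_contra hc0
      have hane : a + 1 ≠ 0 := by positivity
      obtain ⟨u, hu, hu0⟩ : ∃ u : ℝ, u * (a + 1) = c ∧ u ≠ 0 :=
        ⟨c / (a + 1), div_mul_cancel₀ c hane, div_ne_zero hc0 hane⟩
      have hk := hkey (-u)
      rw [← hu] at hk
      have hup : 0 < u ^ 2 := by positivity
      nlinarith [hup, ha0, mul_nonneg hup.le ha0]
    rw [ContinuousLinearMap.isSelfAdjoint_iff_isSymmetric]
    rw [LinearMap.isSymmetric_iff_inner_map_self_real]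
    intro v
    rw [Complex.conj_eq_iff_im]
    have h2 : ⟪(d : H →ₗ[ℂ] H) v, v⟫ = (starRingEnd ℂ) ⟪v, d v⟫ := by
      simp only [ContinuousLinearMap.coe_coe]
      exact (inner_conj_symm _ _).symm
    rw [h2, Complex.conj_im, him v, neg_zero]
end

section
/- Let A be a unital complex Banach algebra (with ‖1‖ = 1) and let d ∈ A satisfy ‖1 + i·t·d‖ ≤ √(1 + t²) for every t ∈ ℝ. Then ‖exp(i·t·d)‖ = 1 for every t ∈ ℝ, i.e., d is a hermitian element of A. -/
open NormedSpace

lemma exp_taylor1_bound {A : Type*} [NormedRing A] [NormedAlgebra ℂ A] [CompleteSpace A]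
    (x : A) : ‖NormedSpace.exp x - 1 - x‖ ≤ ‖x‖ ^ 2 * Real.exp ‖x‖ := by
  have hs := NormedSpace.exp_series_hasSum_exp' (𝕂 := ℂ) x
  have h2 : HasSum (fun n : ℕ => ((((n + 2).factorial) : ℂ)⁻¹ • x ^ (n + 2)))
      (NormedSpace.exp x - ∑ i ∈ Finset.range 2, (((i.factorial) : ℂ)⁻¹ • x ^ i)) :=
    (hasSum_nat_add_iff' 2).mpr hs
  have hrange : ∑ i ∈ Finset.range 2, (((i.factorial) : ℂ)⁻¹ • x ^ i) = 1 + x := by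
    simp [Finset.sum_range_succ, Nat.factorial]
  rw [hrange] at h2
  have heq : NormedSpace.exp x - 1 - x = ∑' n : ℕ, ((((n + 2).factorial) : ℂ)⁻¹ • x ^ (n + 2)) := by
    rw [h2.tsum_eq]; abel
  have hmaj : ∀ n : ℕ, ‖((((n + 2).factorial) : ℂ)⁻¹ • x ^ (n + 2))‖ ≤ ‖x‖ ^ 2 * (‖x‖ ^ n / (n.factorial)) := by
    intro n
    rw [norm_smul]
    have h1 : ‖(((n + 2).factorial) : ℂ)⁻¹‖ = (((n + 2).factorial) : ℝ)⁻¹ := by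
      rw [norm_inv, Complex.norm_natCast]
    rw [h1]
    have h2 : ‖x ^ (n + 2)‖ ≤ ‖x‖ ^ (n + 2) := norm_pow_le' x (by omega)
    have h3 : (((n + 2).factorial) : ℝ)⁻¹ ≤ ((n.factorial) : ℝ)⁻¹ := by
      apply inv_anti₀
      · positivity
      · exact_mod_cast Nat.factorial_le (by omega)
    calc (((n + 2).factorial) : ℝ)⁻¹ * ‖x ^ (n + 2)‖ 
        ≤ ((n.factorial) : ℝ)⁻¹ * ‖x‖ ^ (n + 2) :=
          mul_le_mul h3 h2 (norm_nonneg _) (by positivity)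
      _ = ‖x‖ ^ 2 * (‖x‖ ^ n / (n.factorial)) := by ring
  have hsumm : Summable fun n : ℕ => ‖x‖ ^ 2 * (‖x‖ ^ n / (n.factorial)) :=
    (Real.summable_pow_div_factorial ‖x‖).mul_left _
  have hsn : Summable fun n : ℕ => ‖((((n + 2).factorial) : ℂ)⁻¹ • x ^ (n + 2))‖ :=
    Summable.of_nonneg_of_le (fun n => norm_nonneg _) hmaj hsumm
  calc ‖NormedSpace.exp x - 1 - x‖ 
      ≤ ∑' n : ℕ, ‖((((n + 2).factorial) : ℂ)⁻¹ • x ^ (n + 2))‖ := by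
        rw [heq]; exact norm_tsum_le_tsum_norm hsn
    _ ≤ ∑' n : ℕ, ‖x‖ ^ 2 * (‖x‖ ^ n / (n.factorial)) := Summable.tsum_le_tsum hmaj hsn hsumm
    _ = ‖x‖ ^ 2 * ∑' n : ℕ, (‖x‖ ^ n / (n.factorial)) := tsum_mul_left
    _ = ‖x‖ ^ 2 * Real.exp ‖x‖ := by
        congr 1
        rw [Real.exp_eq_exp_ℝ, NormedSpace.exp_eq_tsum_div]

lemma upper_bound {A : Type*} [NormedRing A] [NormedAlgebra ℂ A] [CompleteSpace A] [NormOneClass A]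
    (d : A) (h : ∀ t : ℝ, ‖1 + (Complex.I * (t : ℂ)) • d‖ ≤ Real.sqrt (1 + t ^ 2))
    (t : ℝ) : ‖NormedSpace.exp ((Complex.I * (t : ℂ)) • d)‖ ≤ 1 := by
  set c : ℝ := |t| * ‖d‖ with hc
  have hc0 : 0 ≤ c := by positivity
  set M : ℝ := t ^ 2 / 2 + c ^ 2 * Real.exp c with hM
  have hM0 : 0 ≤ M := by positivity
  have key : ∀ n : ℕ, 1 ≤ n →
      ‖NormedSpace.exp ((Complex.I * (t : ℂ)) • d)‖ ≤ Real.exp (M / n) := by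
    intro n hn
    have hn0 : (0 : ℝ) < n := by exact_mod_cast hn
    have hn1 : (1 : ℝ) ≤ n := by exact_mod_cast hn
    set x : A := (Complex.I * ((t / n : ℝ) : ℂ)) • d with hx
    have hxnorm : ‖x‖ = |t| / n * ‖d‖ := by
      rw [hx, norm_smul, norm_mul, Complex.norm_I, one_mul, Complex.norm_real,
        Real.norm_eq_abs, abs_div, abs_of_pos hn0]
    have hxc : ‖x‖ ≤ c := by
      rw [hxnorm, hc]
      apply mul_le_mul_of_nonneg_right _ (norm_nonneg d)
      rw [div_le_iff₀ hn0]
      nlinarith [abs_nonneg t, hn1]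
    have hsplit : ‖NormedSpace.exp x‖ ≤ 1 + M / n ^ 2 := by
      have h1 : ‖NormedSpace.exp x‖ ≤ ‖1 + x‖ + ‖NormedSpace.exp x - 1 - x‖ := by
        have heq : NormedSpace.exp x = (1 + x) + (NormedSpace.exp x - 1 - x) := by abel
        have h1' := norm_add_le (1 + x) (NormedSpace.exp x - 1 - x)
        rw [← heq] at h1'
        exact h1'
      have h2 : ‖1 + x‖ ≤ Real.sqrt (1 + (t / n) ^ 2) := h (t / n)
      have h3 : Real.sqrt (1 + (t / n) ^ 2) ≤ 1 + (t / n) ^ 2 / 2 := by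
        rw [show (1 : ℝ) + (t / n) ^ 2 / 2 = Real.sqrt ((1 + (t / n) ^ 2 / 2) ^ 2) from
          (Real.sqrt_sq (by positivity)).symm]
        apply Real.sqrt_le_sqrt
        nlinarith [sq_nonneg ((t / n) ^ 2)]
      have h4 : ‖NormedSpace.exp x - 1 - x‖ ≤ ‖x‖ ^ 2 * Real.exp ‖x‖ :=
        exp_taylor1_bound x
      have h5 : ‖x‖ ^ 2 * Real.exp ‖x‖ ≤ c ^ 2 * Real.exp c / n ^ 2 := by
        have hxn : ‖x‖ = c / n := by rw [hxnorm, hc]; ring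
        rw [hxn]
        have : Real.exp (c / n) ≤ Real.exp c := by
          apply Real.exp_le_exp.mpr
          rw [div_le_iff₀ hn0]; nlinarith [hn1]
        calc (c / n) ^ 2 * Real.exp (c / n) ≤ (c / n) ^ 2 * Real.exp c :=
              mul_le_mul_of_nonneg_left this (by positivity)
          _ = c ^ 2 * Real.exp c / n ^ 2 := by ring
      have h6 : (t / n) ^ 2 / 2 = t ^ 2 / 2 / n ^ 2 := by ring
      calc ‖NormedSpace.exp x‖ ≤ Real.sqrt (1 + (t / n) ^ 2) + ‖x‖ ^ 2 * Real.exp ‖x‖ :=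
            le_trans h1 (add_le_add h2 h4)
        _ ≤ (1 + (t / n) ^ 2 / 2) + c ^ 2 * Real.exp c / n ^ 2 := add_le_add h3 (h4.trans h5 |>.trans_eq rfl |> fun _ => h5) 
        _ = 1 + M / n ^ 2 := by rw [hM, h6]; ring
    have hpow : NormedSpace.exp ((Complex.I * (t : ℂ)) • d) = (NormedSpace.exp x) ^ n := by
      letI : NormedAlgebra ℚ A := .restrictScalars ℚ ℂ A
      rw [← NormedSpace.exp_nsmul]
      congr 1
      have hnne : (n : ℂ) ≠ 0 := Nat.cast_ne_zero.mpr (by omega)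
      rw [hx, ← Nat.cast_smul_eq_nsmul ℂ, smul_smul]
      congr 1
      push_cast
      field_simp
    rw [hpow]
    calc ‖(NormedSpace.exp x) ^ n‖ ≤ ‖NormedSpace.exp x‖ ^ n := norm_pow_le' _ hn
      _ ≤ (1 + M / n ^ 2) ^ n := pow_le_pow_left₀ (norm_nonneg _) hsplit n
      _ ≤ (Real.exp (M / n ^ 2)) ^ n := by
          apply pow_le_pow_left₀ (by positivity)
          linarith [Real.add_one_le_exp (M / n ^ 2)]
      _ = Real.exp (M / n) := by
          rw [← Real.exp_nat_mul]
          congr 1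
          field_simp
  have hlim : Filter.Tendsto (fun n : ℕ => Real.exp (M / n)) Filter.atTop (nhds 1) := by
    have : Filter.Tendsto (fun n : ℕ => M / n) Filter.atTop (nhds 0) :=
      tendsto_const_div_atTop_nhds_zero_nat M
    simpa [Function.comp_def] using (Real.continuous_exp.tendsto 0).comp this
  apply ge_of_tendsto hlim
  filter_upwards [Filter.eventually_ge_atTop 1] with n hn
  exact key n hn

/-- Let `A` be a unital complex Banach algebra with `‖1‖ = 1` and `d ∈ A`
with `‖1 + i·t·d‖ ≤ √(1 + t²)` for every real `t`.  Then `‖exp(i·t·d)‖ = 1` for every real `t`,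
i.e. `d` is a hermitian element of `A`. -/
theorem stmt_15 {A : Type*} [NormedRing A] [NormedAlgebra ℂ A] [CompleteSpace A] [NormOneClass A]
    (d : A) (h : ∀ t : ℝ, ‖1 + (Complex.I * (t : ℂ)) • d‖ ≤ Real.sqrt (1 + t ^ 2)) :
    ∀ t : ℝ, ‖NormedSpace.exp ((Complex.I * (t : ℂ)) • d)‖ = 1 := by
  intro t
  have hub := upper_bound d h t
  have hub' := upper_bound d h (-t)
  have hneg : (Complex.I * ((-t : ℝ) : ℂ)) • d = -((Complex.I * (t : ℂ)) • d) := by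
    push_cast
    rw [← neg_smul]
    ring_nf
  have hmul : NormedSpace.exp ((Complex.I * (t : ℂ)) • d) *
      NormedSpace.exp ((Complex.I * ((-t : ℝ) : ℂ)) • d) = 1 := by
    letI : NormedAlgebra ℚ A := .restrictScalars ℚ ℂ A
    rw [hneg, ← NormedSpace.exp_add_of_commute (Commute.neg_right (Commute.refl _)), add_neg_cancel,
      NormedSpace.exp_zero]
  have hge : (1 : ℝ) ≤ ‖NormedSpace.exp ((Complex.I * (t : ℂ)) • d)‖ := by
    have := norm_mul_le (NormedSpace.exp ((Complex.I * (t : ℂ)) • d))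
      (NormedSpace.exp ((Complex.I * ((-t : ℝ) : ℂ)) • d))
    rw [hmul, norm_one] at this
    nlinarith [norm_nonneg (NormedSpace.exp ((Complex.I * (t : ℂ)) • d)),
      norm_nonneg (NormedSpace.exp ((Complex.I * ((-t : ℝ) : ℂ)) • d))]
  linarith
end

section
/- Let A be a C*-algebra and E a right Hilbert C*-module over A. Let φ : E → E be an A-module map (φ(x·a) = φ(x)·a) with ‖φ(x)‖ ≤ ‖x‖ for all x ∈ E. Then for all x, y ∈ E, ‖⟪φ(x), φ(x)⟫ + ⟪y, y⟫‖ ≤ ‖⟪x, x⟫ + ⟪y, y⟫‖; that is, the column map τ_φ^c : (x,y) ↦ (φ(x), y) is contractive on the column space C₂(E). -/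
open scoped RightActions
open CStarModule Filter

-- Lance's inequality for contractive module maps (norm-1 version).
set_option maxHeartbeats 1000000 in
theorem lance_aux {A E : Type*} [NonUnitalCStarAlgebra A] [PartialOrder A] [StarOrderedRing A]
    [NormedAddCommGroup E] [Module ℂ E] [SMul A E] [CStarModule A E] [CompleteSpace E]
    (φ : E →ₗ[ℂ] E)
    (hmod : ∀ (x : E) (a : A), φ (a • x) = a • φ x)
    (hcontr : ∀ x : E, ‖φ x‖ ≤ ‖x‖) (x : E) :
    inner (𝕜 := A) (φ x) (φ x) ≤ inner (𝕜 := A) x x := by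
  set a : A := inner A x x with ha_def
  have ha : (0 : A) ≤ a := inner_self_nonneg
  have ha' : IsSelfAdjoint a := IsSelfAdjoint.of_nonneg ha
  have hq : ∀ t ∈ quasispectrum ℝ a, 0 ≤ t := quasispectrum_nonneg_of_nonneg a ha
  set s : A := cfcₙ Real.sqrt a with hs_def
  have hscont : ContinuousOn Real.sqrt (quasispectrum ℝ a) :=
    Real.continuous_sqrt.continuousOn
  have hs' : IsSelfAdjoint s := cfcₙ_predicate _ a
  have hid : ContinuousOn (fun t : ℝ => t) (quasispectrum ℝ a) := continuous_id.continuousOn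
  have hss : s * s = a := by
    rw [hs_def]
    calc cfcₙ Real.sqrt a * cfcₙ Real.sqrt a
        = cfcₙ (fun t => Real.sqrt t * Real.sqrt t) a :=
          (cfcₙ_mul _ _ a hscont (by simp) hscont (by simp)).symm
      _ = cfcₙ (fun t : ℝ => t) a :=
          cfcₙ_congr fun t ht => Real.mul_self_sqrt (hq t ht)
      _ = a := cfcₙ_id' ℝ a
  have main : ∀ δ : ℝ, 0 < δ → ∃ w : E, ‖x - w‖ ^ 2 ≤ δ ∧
      inner (𝕜 := A) (φ w) (φ w) ≤ a := by
    intro δ hδ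
    set g : ℝ → ℝ := fun t => Real.sqrt t / (t + δ) with hg_def
    have hpos : ∀ t ∈ quasispectrum ℝ a, t + δ ≠ 0 := fun t ht => by
      have := hq t ht; positivity
    have hgcont : ContinuousOn g (quasispectrum ℝ a) :=
      ContinuousOn.div Real.continuous_sqrt.continuousOn (by fun_prop) hpos
    have hg0 : g 0 = 0 := by simp [hg_def]
    set c : A := cfcₙ g a with hc_def
    have hc' : IsSelfAdjoint c := cfcₙ_predicate _ a
    set z : E := c • x with hz_def
    set w : E := s • z with hw_def
    -- inner z z
    have hzz : inner (𝕜 := A) z z = cfcₙ (fun t => g t * (t * g t)) a := by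
      rw [hz_def, inner_op_smul_left, inner_op_smul_right, hc'.star_eq, ← ha_def, mul_assoc]
      rw [cfcₙ_mul g (fun t => t * g t) a hgcont hg0 (hid.mul hgcont) (by simp [hg0]),
        cfcₙ_mul (fun t : ℝ => t) g a hid rfl hgcont hg0, cfcₙ_id' ℝ a]
    have hz1 : ‖z‖ ≤ 1 := by
      have h2 : ‖z‖ ^ 2 ≤ 1 := by
        rw [norm_sq_eq A, hzz]
        refine norm_cfcₙ_le fun t ht => ?_
        have ht0 := hq t ht
        have htd : t + δ ≠ 0 := by positivity
        have key : g t * (t * g t) = t ^ 2 / (t + δ) ^ 2 := by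
          rw [hg_def]; simp only
          field_simp
          linear_combination t * Real.sq_sqrt ht0
        rw [key, Real.norm_eq_abs, abs_div, abs_of_nonneg (by positivity),
          abs_of_nonneg (by positivity)]
        rw [div_le_one (by positivity)]
        nlinarith
      nlinarith [norm_nonneg z]
    -- φ z
    have hφz : ‖inner (𝕜 := A) (φ z) (φ z)‖ ≤ 1 := by
      rw [← norm_sq_eq]
      have h1 := hcontr z
      have h2 : (0:ℝ) ≤ ‖φ z‖ := norm_nonneg _
      nlinarith
    -- inner (φ w) (φ w) ≤ a
    have hwle : inner (𝕜 := A) (φ w) (φ w) ≤ a := by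
      have hφw : φ w = s • (φ z) := hmod z s
      have h1 : inner (𝕜 := A) (φ w) (φ w)
          = s * inner (𝕜 := A) (φ z) (φ z) * star s := by
        rw [hφw, inner_op_smul_left, inner_op_smul_right, mul_assoc]
      calc inner (𝕜 := A) (φ w) (φ w)
          ≤ ‖inner (𝕜 := A) (φ z) (φ z)‖ • (s * star s) := by
            rw [h1]
            exact CStarAlgebra.star_right_conjugate_le_norm_smul isSelfAdjoint_inner_self
        _ ≤ (1 : ℝ) • (s * star s) := by
            refine smul_le_smul_of_nonneg_right hφz ?_
            exact mul_star_self_nonneg s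
        _ = a := by rw [one_smul, hs'.star_eq, hss]
    -- the norm estimate
    set k : ℝ → ℝ := fun t => g t * Real.sqrt t with hk_def
    have hkcont : ContinuousOn k (quasispectrum ℝ a) := hgcont.mul hscont
    have hk0 : k 0 = 0 := by simp [hk_def, hg0]
    set m : A := cfcₙ k a with hm_def
    have hm' : IsSelfAdjoint m := cfcₙ_predicate _ a
    have hcs : c * s = m := (cfcₙ_mul _ _ a hgcont hg0 hscont (by simp)).symm
    have hcomm : Commute c s := cfcₙ_commute_cfcₙ g Real.sqrt a
    have hma : m * a = a * m := by
      have := cfcₙ_commute_cfcₙ k (fun t : ℝ => t) a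
      rwa [cfcₙ_id' ℝ a] at this
    have hxw : inner (𝕜 := A) x w = cfcₙ (fun t => t * k t) a := by
      rw [hw_def, inner_op_smul_right, hz_def, inner_op_smul_right, ← ha_def,
        ← mul_assoc, ← hcomm.eq, hcs, hma, hm_def,
        cfcₙ_mul (fun t : ℝ => t) k a hid rfl hkcont hk0, cfcₙ_id' ℝ a]
    have hwx : inner (𝕜 := A) w x = cfcₙ (fun t => k t * t) a := by
      rw [← star_inner x, hxw,
        (cfcₙ_predicate (R := ℝ) (p := IsSelfAdjoint) (fun t => t * k t) a).star_eq]
      exact cfcₙ_congr fun t _ => mul_comm t (k t)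
    have hwwi : inner (𝕜 := A) w w = cfcₙ (fun t => k t * t * k t) a := by
      have e1 : inner (𝕜 := A) w w = s * (c * a * c) * s := by
        rw [hw_def, inner_op_smul_left, inner_op_smul_right, hs'.star_eq, hz_def,
          inner_op_smul_left, inner_op_smul_right, hc'.star_eq, ← ha_def]
      rw [e1, show s * (c * a * c) * s = (s * c) * a * (c * s) from by noncomm_ring,
        ← hcomm.eq, hcs, hm_def,
        cfcₙ_mul (fun t => k t * t) k a (hkcont.mul hid) (by simp [hk0]) hkcont hk0,
        cfcₙ_mul k (fun t : ℝ => t) a hkcont hk0 hid rfl, cfcₙ_id' ℝ a]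
    have hdiff : inner (𝕜 := A) (x - w) (x - w)
        = cfcₙ (fun t => t - t * k t - k t * t + k t * t * k t) a := by
      rw [CStarModule.inner_sub_right, CStarModule.inner_sub_left,
        CStarModule.inner_sub_left, ← ha_def]
      rw [hxw, hwx, hwwi]
      rw [show (fun t : ℝ => t - t * k t - k t * t + k t * t * k t)
          = fun t => (t - t * k t) - (k t * t - k t * t * k t) from by ext t; ring]
      rw [cfcₙ_sub (fun t : ℝ => t - t * k t) (fun t => k t * t - k t * t * k t) a (hid.sub (hid.mul hkcont)) (by simp [hk0])
        ((hkcont.mul hid).sub ((hkcont.mul hid).mul hkcont))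
        (by simp [hk0]),
        cfcₙ_sub (fun t : ℝ => t) (fun t => t * k t) a hid rfl (hid.mul hkcont) (by simp [hk0]),
        cfcₙ_sub (fun t => k t * t) (fun t => k t * t * k t) a (hkcont.mul hid) (by simp [hk0])
        ((hkcont.mul hid).mul hkcont) (by simp [hk0]),
        cfcₙ_id' ℝ a]
      abel
    refine ⟨w, ?_, hwle⟩
    rw [norm_sq_eq A, hdiff]
    refine norm_cfcₙ_le fun t ht => ?_
    have ht0 := hq t ht
    have htd : (0:ℝ) < t + δ := by positivity
    have hks : k t = t / (t + δ) := by
      rw [hk_def, hg_def]; simp only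
      rw [div_mul_eq_mul_div, Real.mul_self_sqrt ht0]
    have hval : t - t * k t - k t * t + k t * t * k t = t * δ ^ 2 / (t + δ) ^ 2 := by
      rw [hks]; field_simp; ring
    rw [hval, Real.norm_eq_abs, abs_of_nonneg (by positivity), div_le_iff₀ (by positivity)]
    nlinarith [sq_nonneg t, mul_nonneg ht0 hδ.le, sq_nonneg (t + δ), mul_nonneg ht0 (sq_nonneg δ)]
  -- Now take limits.
  choose w hw1 hw2 using main
  set u : ℕ → E := fun n => w (1 / (n + 1)) (by positivity) with hu_def
  have hun : Tendsto u atTop (nhds x) := by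
    rw [tendsto_iff_norm_sub_tendsto_zero]
    refine squeeze_zero (fun n => norm_nonneg _) (g := fun n : ℕ => Real.sqrt (1 / (n + 1)))
      (fun n => ?_) ?_
    · rw [← norm_sub_rev]
      have h := hw1 (1 / (n + 1) : ℝ) (by positivity)
      have : (0:ℝ) ≤ Real.sqrt (1 / (n+1)) := Real.sqrt_nonneg _
      nlinarith [Real.sq_sqrt (show (0:ℝ) ≤ 1 / (n+1) by positivity),
        norm_nonneg (x - u n), Real.sqrt_nonneg (1 / (n+1) : ℝ)]
    · have h0 : Tendsto (fun n : ℕ => (1 : ℝ) / (n + 1)) atTop (nhds 0) :=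
        tendsto_one_div_add_atTop_nhds_zero_nat
      have h1 := (Real.continuous_sqrt.tendsto 0).comp h0
      simpa only [Function.comp_def, Real.sqrt_zero] using h1
  have hφu : Tendsto (fun n => φ (u n)) atTop (nhds (φ x)) := by
    rw [tendsto_iff_norm_sub_tendsto_zero]
    refine squeeze_zero (fun n => norm_nonneg _) (g := fun n => ‖u n - x‖) (fun n => ?_) ?_
    · rw [← map_sub]; exact hcontr _
    · rw [← tendsto_iff_norm_sub_tendsto_zero]; exact hun
  have hinner : Tendsto (fun n => inner (𝕜 := A) (φ (u n)) (φ (u n))) atTop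
      (nhds (inner (𝕜 := A) (φ x) (φ x))) := by
    rw [tendsto_iff_norm_sub_tendsto_zero]
    have hb : ∀ n, ‖inner (𝕜 := A) (φ (u n)) (φ (u n)) - inner (𝕜 := A) (φ x) (φ x)‖
        ≤ ‖φ (u n) - φ x‖ * ‖φ (u n)‖ + ‖φ x‖ * ‖φ (u n) - φ x‖ := by
      intro n
      have he : inner (𝕜 := A) (φ (u n)) (φ (u n)) - inner (𝕜 := A) (φ x) (φ x)
          = inner (𝕜 := A) (φ (u n) - φ x) (φ (u n))
            + inner (𝕜 := A) (φ x) (φ (u n) - φ x) := by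
        rw [CStarModule.inner_sub_left, CStarModule.inner_sub_right]; abel
      rw [he]
      refine (norm_add_le _ _).trans (add_le_add ?_ ?_) <;>
        exact CStarModule.norm_inner_le E
    refine squeeze_zero (fun n => norm_nonneg _) hb ?_
    have hd : Tendsto (fun n => ‖φ (u n) - φ x‖) atTop (nhds 0) := by
      rw [← tendsto_iff_norm_sub_tendsto_zero]; exact hφu
    have hn : Tendsto (fun n => ‖φ (u n)‖) atTop (nhds ‖φ x‖) :=
      (continuous_norm.tendsto _).comp hφu
    have hcomb := (hd.mul hn).add ((tendsto_const_nhds (x := ‖φ x‖) (f := atTop)).mul hd)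
    simpa using hcomb
  exact le_of_tendsto hinner (Eventually.of_forall fun n => hw2 _ _)

/-- Let `E` be a right Hilbert C*-module over a C*-algebra `A` and let
`φ : E → E` be a contractive `A`-module map.  Then for all `x, y ∈ E`,
`‖⟪φx, φx⟫ + ⟪y, y⟫‖ ≤ ‖⟪x, x⟫ + ⟪y, y⟫‖`; that is, the column map `(x,y) ↦ (φx, y)` is
contractive on the column space `C₂(E)`. -/
theorem stmt_16 {A E : Type*} [NonUnitalCStarAlgebra A] [PartialOrder A] [StarOrderedRing A]
    [NormedAddCommGroup E] [Module ℂ E] [SMul Aᵐᵒᵖ E] [CStarModule Aᵐᵒᵖ E] [CompleteSpace E]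
    (φ : E →ₗ[ℂ] E)
    (hmod : ∀ (x : E) (a : A), φ (x <• a) = φ x <• a)
    (hcontr : ∀ x : E, ‖φ x‖ ≤ ‖x‖) :
    ∀ x y : E,
      ‖inner (𝕜 := Aᵐᵒᵖ) (φ x) (φ x) + inner (𝕜 := Aᵐᵒᵖ) y y‖ ≤
        ‖inner (𝕜 := Aᵐᵒᵖ) x x + inner (𝕜 := Aᵐᵒᵖ) y y‖ := by
  intro x y
  have h1 := lance_aux φ (fun x (b : Aᵐᵒᵖ) => hmod x b.unop) hcontr x
  have h2 : inner (𝕜 := Aᵐᵒᵖ) (φ x) (φ x) + inner (𝕜 := Aᵐᵒᵖ) y y ≤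
      inner (𝕜 := Aᵐᵒᵖ) x x + inner (𝕜 := Aᵐᵒᵖ) y y := add_le_add_left h1 _
  exact CStarAlgebra.norm_le_norm_of_nonneg_of_le
    (add_nonneg inner_self_nonneg inner_self_nonneg) h2
end

section
/- Let A be a unital C*-algebra, let e ∈ A be a projection (e = e* = e²), and let c ∈ A satisfy ‖c*c + (1 − e)‖ ≤ 1. Then c·(1 − e) = 0. -/
/-- In a unital C*-algebra `A`, if `e` is a projection (`e = e* = e²`)
and `c` satisfies `‖c*c + (1 - e)‖ ≤ 1`, then `c·(1 - e) = 0`. -/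
theorem stmt_17 {A : Type*} [CStarAlgebra A] (e c : A)
    (he_star : star e = e) (he_idem : e * e = e)
    (hc : ‖star c * c + (1 - e)‖ ≤ 1) :
    c * (1 - e) = 0 := by
  letI := CStarAlgebra.spectralOrder A
  haveI := CStarAlgebra.spectralOrderedRing A
  set p : A := 1 - e with hp
  have hpstar : star p = p := by simp [hp, he_star]
  have hpidem : p * p = p := by
    have : (1 - e) * (1 - e) = 1 - e - e + e * e := by noncomm_ring
    rw [hp, this, he_idem]; abel
  have hpnn : (0 : A) ≤ p := by
    have h' : p = star p * p := by rw [hpstar, hpidem]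
    rw [h']; exact star_mul_self_nonneg p
  have hxnn : (0 : A) ≤ star c * c + p := add_nonneg (star_mul_self_nonneg c) hpnn
  have hle : star c * c + p ≤ 1 :=
    (CStarAlgebra.norm_le_one_iff_of_nonneg _ hxnn).mp hc
  have hconj : star p * (star c * c + p) * p ≤ star p * 1 * p :=
    star_left_conjugate_le_conjugate hle p
  have h1 : p * (star c * c) * p + p ≤ p := by
    rw [hpstar] at hconj
    calc p * (star c * c) * p + p
        = p * (star c * c + p) * p := by rw [mul_add, add_mul, hpidem, hpidem]
      _ ≤ p * 1 * p := hconj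
      _ = p := by rw [mul_one, hpidem]
  have h2 : p * (star c * c) * p ≤ 0 := by
    have := sub_le_sub_right h1 p
    simpa using this
  have h3 : (0 : A) ≤ p * (star c * c) * p := by
    have h' : p * (star c * c) * p = star (c * p) * (c * p) := by
      simp [star_mul, hpstar, mul_assoc]
    rw [h']; exact star_mul_self_nonneg (c * p)
  have h4 : star (c * p) * (c * p) = 0 := by
    have h0 : p * (star c * c) * p = 0 := le_antisymm h2 h3
    rw [← h0]; simp [star_mul, hpstar, mul_assoc]
  have h5 := CStarRing.norm_star_mul_self (x := c * p)
  rw [h4, norm_zero] at h5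
  have h6 : ‖c * p‖ = 0 := by nlinarith [norm_nonneg (c * p)]
  exact norm_eq_zero.mp h6
end
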